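/- arXiv:1704.03637 — 7 statements merged into one kernel-verified Lean document; each statement's English description precedes it below -/
import Mathlib

section
/- Let m ≥ 2 be an integer. Then every polynomial f ∈ 𝔽₂[X] of degree m satisfies the equivalence "f divides X^(2^m) − X if and only if f is irreducible" if and only if m is an odd prime or m = 9. -/
open Polynomial


lemma zmod2_eq_one : ∀ {x : ZMod 2}, x ≠ 0 → x = 1 := by decide

lemma monic_of_ne_zero' {f : (ZMod 2)[X]} (hf : f ≠ 0) : f.Monic :=
  zmod2_eq_one (leadingCoeff_ne_zero.mpr hf)

lemma Xq_sub_X_eq (d : ℕ) :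
    (X ^ 2 ^ d - X : (ZMod 2)[X]) = X * (X ^ (2 ^ d - 1) - 1) := by
  have h1 : (1:ℕ) ≤ 2 ^ d := Nat.one_le_two_pow
  rw [mul_sub, mul_one, ← pow_succ']
  congr 2
  omega

lemma pow_sub_dvd {d n : ℕ} (h : d ∣ n) :
    (X ^ 2 ^ d - X : (ZMod 2)[X]) ∣ X ^ 2 ^ n - X := by
  obtain ⟨k, rfl⟩ := h
  have h1 : (2:ℕ) ^ d - 1 ∣ 2 ^ (d * k) - 1 := by
    simpa [pow_mul] using Nat.sub_dvd_pow_sub_pow (2 ^ d) 1 k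
  obtain ⟨j, hj⟩ := h1
  have h2 : (X ^ (2 ^ d - 1) - 1 : (ZMod 2)[X]) ∣ X ^ (2 ^ (d*k) - 1) - 1 := by
    have := sub_dvd_pow_sub_pow (X ^ (2 ^ d - 1) : (ZMod 2)[X]) 1 j
    simpa [← pow_mul, ← hj] using this
  rw [Xq_sub_X_eq d, Xq_sub_X_eq (d*k)]
  exact mul_dvd_mul_left _ h2

-- A1
lemma irred_dvd_of_deg_dvd {f : (ZMod 2)[X]} (hf : Irreducible f) {n : ℕ}
    (h : f.natDegree ∣ n) : f ∣ X ^ 2 ^ n - X := by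
  haveI := Fact.mk hf
  set K := AdjoinRoot f with hK
  set α := AdjoinRoot.root f with hα
  have hf0 : f ≠ 0 := hf.ne_zero
  let pb := AdjoinRoot.powerBasis hf0
  haveI : Module.Finite (ZMod 2) K := pb.finite
  haveI : Finite K := Module.finite_of_finite (ZMod 2)
  haveI : Fintype K := Fintype.ofFinite K
  have hcard : Fintype.card K = 2 ^ f.natDegree := by
    rw [Module.card_eq_pow_finrank (K := ZMod 2), pb.finrank]
    show Fintype.card (ZMod 2) ^ (AdjoinRoot.powerBasis hf0).dim = 2 ^ f.natDegree
    rw [ZMod.card]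
    rfl
  obtain ⟨k, hk⟩ := h
  have hroot : α ^ 2 ^ n = α := by
    rw [hk, pow_mul, ← hcard]
    exact FiniteField.pow_card_pow k α
  have hmin : minpoly (ZMod 2) α = f := by
    rw [hα, AdjoinRoot.minpoly_root hf0, (monic_of_ne_zero' hf0).leadingCoeff]
    simp
  rw [← hmin]
  apply minpoly.dvd
  simp [hroot]

lemma pow_pow_mul {K : Type*} [Monoid K] (α : K) {m : ℕ} (hm : α ^ 2 ^ m = α) (k : ℕ) :
    α ^ 2 ^ (m * k) = α := by
  induction k with
  | zero => simp
  | succ k ih => rw [Nat.mul_succ, pow_add, pow_mul, ih, hm]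

lemma pow_gcd {K : Type*} [Monoid K] (α : K) (a b : ℕ) :
    α ^ 2 ^ a = α → α ^ 2 ^ b = α → α ^ 2 ^ (Nat.gcd a b) = α := by
  induction a, b using Nat.gcd.induction with
  | H0 n => intro _ hb; simpa using hb
  | H1 m n hm ih =>
    intro ha hb
    rw [Nat.gcd_rec]
    refine ih ?_ ha
    have h1 : α ^ 2 ^ (m * (n / m)) = α := pow_pow_mul α ha _
    calc α ^ 2 ^ (n % m) = (α ^ 2 ^ (m * (n / m))) ^ 2 ^ (n % m) := by rw [h1]
    _ = α ^ 2 ^ (m * (n / m) + n % m) := by rw [← pow_mul, ← pow_add]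
    _ = α ^ 2 ^ n := by rw [Nat.div_add_mod]
    _ = α := hb

lemma aeval_pow_fixed {K : Type*} [Field K] [Algebra (ZMod 2) K] (α : K) (g : ℕ)
    (hα : α ^ 2 ^ g = α) (P : (ZMod 2)[X]) : (aeval α P) ^ 2 ^ g = aeval α P := by
  haveI : CharP K 2 := charP_of_injective_algebraMap (algebraMap (ZMod 2) K).injective 2
  have hc : ∀ a : ZMod 2, (algebraMap (ZMod 2) K a) ^ 2 ^ g = algebraMap (ZMod 2) K a := by
    intro a
    rw [← map_pow, ZMod.pow_card_pow]
  induction P using Polynomial.induction_on' with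
  | add p q hp hq => rw [map_add, add_pow_char_pow, hp, hq]
  | monomial n a =>
    rw [aeval_monomial, mul_pow, hc, ← pow_mul, mul_comm n, pow_mul, hα]

-- A2
lemma deg_dvd_of_irred_dvd {f : (ZMod 2)[X]} (hf : Irreducible f) {n : ℕ}
    (h : f ∣ X ^ 2 ^ n - X) : f.natDegree ∣ n := by
  haveI := Fact.mk hf
  set α := AdjoinRoot.root f with hαdef
  have hf0 : f ≠ 0 := hf.ne_zero
  let pb := AdjoinRoot.powerBasis hf0
  haveI : Module.Finite (ZMod 2) (AdjoinRoot f) := pb.finite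
  haveI : Finite (AdjoinRoot f) := Module.finite_of_finite (ZMod 2)
  haveI : Fintype (AdjoinRoot f) := Fintype.ofFinite _
  have hd1 : 0 < f.natDegree := hf.natDegree_pos
  have hcard : Fintype.card (AdjoinRoot f) = 2 ^ f.natDegree := by
    rw [Module.card_eq_pow_finrank (K := ZMod 2), pb.finrank]
    show Fintype.card (ZMod 2) ^ (AdjoinRoot.powerBasis hf0).dim = 2 ^ f.natDegree
    rw [ZMod.card]; rfl
  have hn : α ^ 2 ^ n = α := by
    obtain ⟨q, hq⟩ := h
    have h0 : (aeval α) ((X : (ZMod 2)[X]) ^ 2 ^ n - X) = 0 := by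
      rw [hq, map_mul, AdjoinRoot.aeval_eq, AdjoinRoot.mk_self, zero_mul]
    simpa [sub_eq_zero] using h0
  have hd : α ^ 2 ^ f.natDegree = α := by
    rw [← hcard]; exact FiniteField.pow_card α
  set g := Nat.gcd n f.natDegree with hgdef
  have hg : α ^ 2 ^ g = α := pow_gcd α n f.natDegree hn hd
  have hall : ∀ x : AdjoinRoot f, x ^ 2 ^ g = x := by
    intro x
    obtain ⟨P, rfl⟩ := AdjoinRoot.mk_surjective x
    rw [← AdjoinRoot.aeval_eq]
    exact aeval_pow_fixed α g hg P
  have hg1 : 0 < g := Nat.gcd_pos_of_pos_right n hd1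
  have hne : (X ^ 2 ^ g - X : (AdjoinRoot f)[X]) ≠ 0 :=
    FiniteField.X_pow_card_pow_sub_X_ne_zero _ hg1.ne' one_lt_two
  have hdeg : (X ^ 2 ^ g - X : (AdjoinRoot f)[X]).natDegree = 2 ^ g :=
    FiniteField.X_pow_card_pow_sub_X_natDegree_eq _ hg1.ne' one_lt_two
  have hsub : (Finset.univ : Finset (AdjoinRoot f)) ⊆
      (X ^ 2 ^ g - X : (AdjoinRoot f)[X]).roots.toFinset := by
    intro x _
    rw [Multiset.mem_toFinset, mem_roots hne]
    simp [sub_eq_zero, hall x]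
  have hle : 2 ^ f.natDegree ≤ 2 ^ g := by
    calc 2 ^ f.natDegree = Fintype.card (AdjoinRoot f) := hcard.symm
    _ = Finset.univ.card := rfl
    _ ≤ (X ^ 2 ^ g - X : (AdjoinRoot f)[X]).roots.toFinset.card := Finset.card_le_card hsub
    _ ≤ Multiset.card (X ^ 2 ^ g - X : (AdjoinRoot f)[X]).roots := Multiset.toFinset_card_le _
    _ ≤ _ := (X ^ 2 ^ g - X : (AdjoinRoot f)[X]).card_roots' 
    _ = 2 ^ g := hdeg
  have : f.natDegree ≤ g := (Nat.pow_le_pow_iff_right one_lt_two).mp hle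
  have hgd : g ∣ f.natDegree := Nat.gcd_dvd_right n f.natDegree
  have : g = f.natDegree := le_antisymm (Nat.le_of_dvd hd1 hgd) this
  rw [← this]
  exact Nat.gcd_dvd_left n f.natDegree

lemma sf {m : ℕ} (hm : m ≠ 0) : Squarefree (X ^ 2 ^ m - X : (ZMod 2)[X]) := by
  apply Polynomial.Separable.squarefree
  rw [Polynomial.separable_def]
  have hder : derivative (X ^ 2 ^ m - X : (ZMod 2)[X]) = -1 := by
    rw [derivative_sub, derivative_X_pow, derivative_X]
    have : ((2:(ZMod 2))) ^ m = 0 := by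
      rw [show ((2:(ZMod 2))) = 0 by decide, zero_pow hm]
    push_cast
    rw [this]
    simp
  rw [hder]
  exact ⟨0, -1, by ring⟩

lemma deg_one_char {q : (ZMod 2)[X]} (hq : q.Monic) (h1 : q.natDegree = 1) :
    q = X ∨ q = X + 1 := by
  have := Polynomial.eq_X_add_C_of_natDegree_le_one (le_of_eq h1)
  rw [show q.coeff 1 = 1 from by simpa [h1] using hq.coeff_natDegree] at this
  rcases (show ∀ x : ZMod 2, x = 0 ∨ x = 1 by decide) (q.coeff 0) with h | h <;>
    rw [h] at this <;> simp [this]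

lemma no_root_of_irred {q : (ZMod 2)[X]} (h3 : 1 < q.natDegree) (hi : Irreducible q)
    (c : ZMod 2) : q.eval c ≠ 0 := by
  intro hc
  obtain ⟨g, hg⟩ := dvd_iff_isRoot.mpr hc
  rcases hi.isUnit_or_isUnit hg with h | h
  · exact (Polynomial.not_isUnit_of_natDegree_pos _ (by simp) : ¬ IsUnit (X - C c)) h
  · have hgne : g ≠ 0 := by rintro rfl; simp [hg] at h3
    have : q.natDegree = 1 := by
      rw [hg, natDegree_mul (X_sub_C_ne_zero c) hgne, natDegree_X_sub_C,
        natDegree_eq_zero_of_isUnit h, add_zero]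
    omega

lemma deg_three_char {q : (ZMod 2)[X]} (hq : q.Monic) (h3 : q.natDegree = 3)
    (hi : Irreducible q) : q = X ^ 3 + X + 1 ∨ q = X ^ 3 + X ^ 2 + 1 := by
  have hc3 : q.coeff 3 = 1 := by simpa [h3] using hq.coeff_natDegree
  have h0 : q.coeff 0 = 1 := by
    have := no_root_of_irred (by omega) hi 0
    rw [show q.eval 0 = q.coeff 0 by simp [eval_eq_sum_range, h3,
      Finset.sum_range_succ]] at this
    exact (show ∀ x : ZMod 2, x ≠ 0 → x = 1 by decide) _ this
  have h1 : q.coeff 1 + q.coeff 2 = 1 := by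
    have := no_root_of_irred (by omega) hi 1
    rw [eval_eq_sum_range, h3] at this
    simp [Finset.sum_range_succ, h0, hc3] at this
    have h2 := (show ∀ x : ZMod 2, x ≠ 0 → x = 1 by decide) _ this
    -- this : 1 + q.coeff 1 + q.coeff 2 + 1 ≠ 0  (roughly)
    revert h2
    generalize q.coeff 1 = a; generalize q.coeff 2 = b
    revert a b; decide
  have hz : ∀ n, 3 < n → q.coeff n = 0 := fun n hn =>
    coeff_eq_zero_of_natDegree_lt (by omega)
  rcases (show ∀ a b : ZMod 2, a + b = 1 → (a = 1 ∧ b = 0) ∨ (a = 0 ∧ b = 1) by decide)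
      _ _ h1 with ⟨ha, hb⟩ | ⟨ha, hb⟩
  · left
    ext n
    match n with
    | 0 => simp [h0, coeff_X_pow, coeff_one, coeff_X]
    | 1 => simp [ha, coeff_X_pow, coeff_one, coeff_X]
    | 2 => simp [hb, coeff_X_pow, coeff_one, coeff_X]
    | 3 => simp [hc3, coeff_X_pow, coeff_one, coeff_X]
    | (n+4) =>
      simp [hz (n+4) (by omega), coeff_X_pow, coeff_one, coeff_X, Nat.succ_ne_zero]
      try omega
  · right
    ext n
    match n with
    | 0 => simp [h0, coeff_X_pow, coeff_one, coeff_X]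
    | 1 => simp [ha, coeff_X_pow, coeff_one, coeff_X]
    | 2 => simp [hb, coeff_X_pow, coeff_one, coeff_X]
    | 3 => simp [hc3, coeff_X_pow, coeff_one, coeff_X]
    | (n+4) =>
      simp [hz (n+4) (by omega), coeff_X_pow, coeff_one, coeff_X, Nat.succ_ne_zero]
      try omega

lemma prop_div_le {e d : ℕ} (hdvd : e ∣ d) (hlt : e < d) : e ≤ d / 2 := by
  obtain ⟨t, ht⟩ := hdvd
  have ht2 : 2 ≤ t := by rcases Nat.lt_or_ge t 2 with h | h; · interval_cases t <;> omega
                         · exact h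
  have : e * 2 ≤ e * t := Nat.mul_le_mul_left e ht2
  omega

lemma exists_irreds {d k : ℕ} (hd : d ≠ 0)
    (hineq : (k - 1) * d + d / 2 * 2 ^ (d / 2) < 2 ^ d) :
    ∃ T : Finset (ZMod 2)[X], T.card = k ∧
      ∀ q ∈ T, q.Monic ∧ Irreducible q ∧ q.natDegree = d := by
  classical
  set K := GaloisField 2 d with hKdef
  haveI : Fintype K := Fintype.ofFinite K
  have hcard : Fintype.card K = 2 ^ d := by
    rw [← Nat.card_eq_fintype_card, GaloisField.card 2 d hd]
  have hint : ∀ x : K, IsIntegral (ZMod 2) x := fun x => IsIntegral.of_finite (ZMod 2) x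
  set Good : Finset K := Finset.univ.filter
    (fun x => (minpoly (ZMod 2) x).natDegree = d) with hGood
  -- bad elements lie in the union of root sets
  have hbad : (Finset.univ \ Good) ⊆ d.properDivisors.biUnion
      (fun e => (X ^ 2 ^ e - X : K[X]).roots.toFinset) := by
    intro x hx
    rw [Finset.mem_sdiff, hGood, Finset.mem_filter] at hx
    have hxd : (minpoly (ZMod 2) x).natDegree ≠ d := fun h => hx.2 ⟨hx.1, h⟩
    set e := (minpoly (ZMod 2) x).natDegree with he
    have hdvd : e ∣ d := by
      have := minpoly.degree_dvd (hint x)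
      rwa [GaloisField.finrank 2 hd] at this
    have he0 : 0 < e := minpoly.natDegree_pos (hint x)
    rw [Finset.mem_biUnion]
    refine ⟨e, Nat.mem_properDivisors.mpr ⟨hdvd, lt_of_le_of_ne (Nat.le_of_dvd
      (Nat.pos_of_ne_zero hd) hdvd) hxd⟩, ?_⟩
    have hdvd2 : minpoly (ZMod 2) x ∣ X ^ 2 ^ e - X :=
      irred_dvd_of_deg_dvd (minpoly.irreducible (hint x)) dvd_rfl
    have hxroot : x ^ 2 ^ e = x := by
      obtain ⟨q, hq⟩ := hdvd2
      have : (aeval x) ((X : (ZMod 2)[X]) ^ 2 ^ e - X) = 0 := by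
        rw [hq, map_mul, minpoly.aeval, zero_mul]
      simpa [sub_eq_zero] using this
    rw [Multiset.mem_toFinset, mem_roots (FiniteField.X_pow_card_pow_sub_X_ne_zero _
      he0.ne' one_lt_two)]
    simp [IsRoot, sub_eq_zero, hxroot]
  -- bound the bad set
  have hbadcard : (Finset.univ \ Good).card ≤ d / 2 * 2 ^ (d / 2) := by
    refine le_trans (Finset.card_le_card hbad) (le_trans (Finset.card_biUnion_le) ?_)
    have hbound : ∀ e ∈ d.properDivisors,
        ((X ^ 2 ^ e - X : K[X]).roots.toFinset).card ≤ 2 ^ (d / 2) := by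
      intro e hee
      obtain ⟨hdvd, hlt⟩ := Nat.mem_properDivisors.mp hee
      have he2 : e ≤ d / 2 := prop_div_le hdvd hlt
      calc ((X ^ 2 ^ e - X : K[X]).roots.toFinset).card
          ≤ Multiset.card (X ^ 2 ^ e - X : K[X]).roots := Multiset.toFinset_card_le _
        _ ≤ (X ^ 2 ^ e - X : K[X]).natDegree := card_roots' _
        _ ≤ 2 ^ (d / 2) := by
            rcases Nat.eq_zero_or_pos e with rfl | he0
            · simp
            · rw [FiniteField.X_pow_card_pow_sub_X_natDegree_eq _ he0.ne' one_lt_two]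
              exact Nat.pow_le_pow_right (by norm_num) he2
    calc (d.properDivisors.sum fun e => ((X ^ 2 ^ e - X : K[X]).roots.toFinset).card)
        ≤ d.properDivisors.sum (fun _ => 2 ^ (d / 2)) := Finset.sum_le_sum hbound
      _ = d.properDivisors.card * 2 ^ (d / 2) := by rw [Finset.sum_const, smul_eq_mul]
      _ ≤ d / 2 * 2 ^ (d / 2) := by
          refine Nat.mul_le_mul_right _ ?_
          have hsubIcc : d.properDivisors ⊆ Finset.Icc 1 (d / 2) := by
            intro e hee
            obtain ⟨hdvd, hlt⟩ := Nat.mem_properDivisors.mp hee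
            have he0 : 0 < e := by
              rcases Nat.eq_zero_or_pos e with rfl | h
              · exact absurd (zero_dvd_iff.mp hdvd) hd
              · exact h
            exact Finset.mem_Icc.mpr ⟨he0, prop_div_le hdvd hlt⟩
          calc d.properDivisors.card ≤ (Finset.Icc 1 (d / 2)).card :=
                Finset.card_le_card hsubIcc
            _ = d / 2 := by rw [Nat.card_Icc]; omega
  -- good set is large
  have hgoodcard : (k - 1) * d < Good.card := by
    have h1 : (Finset.univ \ Good).card = 2 ^ d - Good.card := by
      rw [Finset.card_sdiff_of_subset (Finset.subset_univ Good), Finset.card_univ, hcard]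
    have h2 : Good.card ≤ 2 ^ d := by
      rw [← hcard, ← Finset.card_univ]; exact Finset.card_le_univ Good
    omega
  -- image under minpoly
  set T0 : Finset (ZMod 2)[X] := Good.image (fun x => minpoly (ZMod 2) x) with hT0
  have hfiber : ∀ p ∈ T0, (Good.filter (fun x => minpoly (ZMod 2) x = p)).card ≤ d := by
    intro p hp
    rw [hT0, Finset.mem_image] at hp
    obtain ⟨x0, hx0, rfl⟩ := hp
    rw [hGood, Finset.mem_filter] at hx0
    set p := minpoly (ZMod 2) x0
    have hpm : (p.map (algebraMap (ZMod 2) K)) ≠ 0 := by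
      refine Polynomial.map_ne_zero ?_
      exact minpoly.ne_zero (hint x0)
    have hsubroots : Good.filter (fun x => minpoly (ZMod 2) x = p) ⊆
        (p.map (algebraMap (ZMod 2) K)).roots.toFinset := by
      intro x hx
      rw [Finset.mem_filter] at hx
      rw [Multiset.mem_toFinset, mem_roots hpm, IsRoot, Polynomial.eval_map_algebraMap]
      rw [← hx.2]
      exact minpoly.aeval _ _
    calc (Good.filter (fun x => minpoly (ZMod 2) x = p)).card
        ≤ (p.map (algebraMap (ZMod 2) K)).roots.toFinset.card := Finset.card_le_card hsubroots
      _ ≤ Multiset.card (p.map (algebraMap (ZMod 2) K)).roots := Multiset.toFinset_card_le _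
      _ ≤ (p.map (algebraMap (ZMod 2) K)).natDegree := card_roots' _
      _ = p.natDegree := natDegree_map _
      _ = d := hx0.2
  have hT0card : k ≤ T0.card := by
    have h2 : Good.card ≤ d * T0.card := Finset.card_le_mul_card_image Good d hfiber
    by_contra hc
    push_neg at hc
    have h3 : d * T0.card ≤ d * (k - 1) := Nat.mul_le_mul_left d (by omega)
    have h4 : d * (k - 1) = (k - 1) * d := Nat.mul_comm _ _
    omega
  obtain ⟨T, hTsub, hTcard⟩ := Finset.exists_subset_card_eq hT0card
  refine ⟨T, hTcard, ?_⟩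
  intro q hq
  have hq0 := hTsub hq
  rw [hT0, Finset.mem_image] at hq0
  obtain ⟨x, hx, rfl⟩ := hq0
  rw [hGood, Finset.mem_filter] at hx
  exact ⟨minpoly.monic (hint x), minpoly.irreducible (hint x), hx.2⟩

lemma sq_lt_twopow : ∀ d : ℕ, 7 ≤ d → d * d < 2 ^ (d - 1) := by
  intro d
  induction d with
  | zero => omega
  | succ n ih =>
    intro h
    rcases Nat.lt_or_ge n 7 with hn | hn
    · interval_cases n <;> first | omega | norm_num
    · have h1 := ih hn
      have h2 : 2 * n + 1 ≤ n * n := by nlinarith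
      have h3 : n + 1 - 1 = (n - 1) + 1 := by omega
      have h4 : (2:ℕ) ^ ((n-1)+1) = 2 ^ (n-1) + 2 ^ (n-1) := by rw [pow_succ]; ring
      calc (n+1) * (n+1) = n * n + (2 * n + 1) := by ring
        _ < 2 ^ (n-1) + (2*n+1) := by omega
        _ ≤ 2 ^ (n-1) + n * n := by omega
        _ < 2 ^ (n-1) + 2 ^ (n-1) := by omega
        _ = 2 ^ (n + 1 - 1) := by rw [h3, h4]

lemma half_pow_le {d : ℕ} (hd : 6 ≤ d) : d / 2 * 2 ^ (d / 2) ≤ 2 ^ (d - 1) := by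
  set t := d / 2 with ht
  have ht3 : 3 ≤ t := by omega
  have h1 : t ≤ 2 ^ (t - 1) := by
    have := Nat.lt_two_pow_self (n := t - 1)
    omega
  calc t * 2 ^ t ≤ 2 ^ (t-1) * 2 ^ t := Nat.mul_le_mul_right _ h1
    _ = 2 ^ (t - 1 + t) := by rw [pow_add]
    _ ≤ 2 ^ (d - 1) := Nat.pow_le_pow_right (by norm_num) (by omega)

lemma main_ineq {d k : ℕ} (hd : 5 ≤ d) (hk : k ≤ d) :
    (k - 1) * d + d / 2 * 2 ^ (d / 2) < 2 ^ d := by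
  have hmono : (k - 1) * d ≤ (d - 1) * d := Nat.mul_le_mul_right d (by omega)
  rcases Nat.lt_or_ge d 7 with h7 | h7
  · have : (d - 1) * d + d / 2 * 2 ^ (d / 2) < 2 ^ d := by interval_cases d <;> norm_num
    omega
  · have h1 : (d - 1) * d < 2 ^ (d - 1) := lt_of_le_of_lt (Nat.mul_le_mul_right d (by omega))
      (sq_lt_twopow d h7)
    have h2 := half_pow_le (show 6 ≤ d by omega)
    have h3 : (2:ℕ) ^ (d - 1) + 2 ^ (d - 1) = 2 ^ d := by
      rw [← two_mul, ← pow_succ']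
      congr 1
      omega
    omega

lemma k2_ineq {d : ℕ} (hd : 3 ≤ d) : 1 * d + d / 2 * 2 ^ (d / 2) < 2 ^ d := by
  rcases Nat.lt_or_ge d 5 with h5 | h5
  · interval_cases d <;> norm_num
  · have := main_ineq h5 (show 2 ≤ d by omega)
    omega

lemma construct {m d k : ℕ} (hd : d ≠ 0) (hdvd : d ∣ m) (hk : 2 ≤ k)
    (hineq : (k - 1) * d + d / 2 * 2 ^ (d / 2) < 2 ^ d) :
    ∃ f : (ZMod 2)[X], f.natDegree = k * d ∧ f ∣ X ^ 2 ^ m - X ∧ ¬ Irreducible f := by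
  classical
  obtain ⟨T, hTcard, hT⟩ := exists_irreds hd hineq
  have hne : ∀ q ∈ T, (q : (ZMod 2)[X]) ≠ 0 := fun q hq => (hT q hq).2.1.ne_zero
  refine ⟨T.prod id, ?_, ?_, ?_⟩
  · rw [show (T.prod id : (ZMod 2)[X]) = ∏ q ∈ T, q from rfl,
      natDegree_prod _ _ (fun q hq => hne q hq)]
    rw [Finset.sum_congr rfl (fun q hq => (hT q hq).2.2), Finset.sum_const, hTcard,
      smul_eq_mul]
  · apply Finset.prod_dvd_of_coprime
    · intro p hp q hq hpq
      simp only [Function.onFun, id]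
      rw [(hT p hp).2.1.coprime_iff_not_dvd]
      intro hdvd'
      obtain ⟨c, hc⟩ := hdvd'
      rcases (hT q hq).2.1.isUnit_or_isUnit hc with h | h
      · exact (hT p hp).2.1.not_isUnit h
      · obtain ⟨u, hu⟩ := h
        have : Associated p q := ⟨u, by rw [hc, ← hu]⟩
        exact hpq (Polynomial.eq_of_monic_of_associated (hT p hp).1 (hT q hq).1 this)
    · intro q hq
      exact dvd_trans (irred_dvd_of_deg_dvd (hT q hq).2.1 (by rw [(hT q hq).2.2]))
        (pow_sub_dvd hdvd)
  · intro hirr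
    obtain ⟨q, hq⟩ := Finset.card_pos.mp (show 0 < T.card by omega)
    have hprod : T.prod id = q * (T.erase q).prod id := (Finset.mul_prod_erase T id hq).symm
    rcases hirr.isUnit_or_isUnit hprod with h | h
    · exact (hT q hq).2.1.not_isUnit h
    · have hcard' : (T.erase q).card = k - 1 := by rw [Finset.card_erase_of_mem hq, hTcard]
      have hdeg : ((T.erase q).prod id).natDegree = (k - 1) * d := by
        rw [show ((T.erase q).prod id : (ZMod 2)[X]) = ∏ p ∈ T.erase q, p from rfl,
          natDegree_prod _ _ (fun p hp => hne p (Finset.mem_of_mem_erase hp)),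
          Finset.sum_congr rfl (fun p hp => (hT p (Finset.mem_of_mem_erase hp)).2.2),
          Finset.sum_const, hcard', smul_eq_mul]
      have := natDegree_eq_zero_of_isUnit h
      rw [hdeg] at this
      have : 1 ≤ (k - 1) * d := Nat.one_le_iff_ne_zero.mpr (by
        intro hc
        rcases Nat.mul_eq_zero.mp hc with h' | h' <;> omega)
      omega

lemma assoc_eq {a b : (ZMod 2)[X]} (h : Associated a b) : a = b := by
  obtain ⟨u, hu⟩ := h
  have h1 : IsUnit (u : (ZMod 2)[X]) := u.isUnit
  obtain ⟨r, hr, hc⟩ := Polynomial.isUnit_iff.mp h1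
  have : r = 1 := by
    rcases (show ∀ x : ZMod 2, IsUnit x → x = 1 by decide) r hr with h; exact h
  rw [← hu, ← hc, this]
  simp

lemma nodup_card_le_two {M : Multiset (ZMod 2)[X]} (hnd : M.Nodup) {p₁ p₂ : (ZMod 2)[X]}
    (hmem : ∀ q ∈ M, q = p₁ ∨ q = p₂) : Multiset.card M ≤ 2 := by
  classical
  have h1 : M.toFinset ⊆ {p₁, p₂} := by
    intro q hq
    rcases hmem q (Multiset.mem_toFinset.mp hq) with h | h <;> simp [h]
  calc Multiset.card M = M.toFinset.card := (Multiset.toFinset_card_eq_card_iff_nodup.mpr hnd).symm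
    _ ≤ ({p₁, p₂} : Finset (ZMod 2)[X]).card := Finset.card_le_card h1
    _ ≤ 2 := Finset.card_le_two

open UniqueFactorizationMonoid in
lemma dvd_imp_irred {m : ℕ} (hm : 2 ≤ m) (hmain : m.Prime ∧ Odd m ∨ m = 9)
    {f : (ZMod 2)[X]} (hdeg : f.natDegree = m) (hdvd : f ∣ X ^ 2 ^ m - X) :
    Irreducible f := by
  classical
  have hf0 : f ≠ 0 := by intro h; rw [h] at hdeg; simp at hdeg; omega
  have hsf : Squarefree f := (sf (show m ≠ 0 by omega)).squarefree_of_dvd hdvd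
  set M := normalizedFactors f with hM
  have hprod : M.prod = f := assoc_eq (prod_normalizedFactors hf0)
  have hnodup : M.Nodup := (squarefree_iff_nodup_normalizedFactors hf0).mp hsf
  have hzero : (0 : (ZMod 2)[X]) ∉ M := fun h => (irreducible_of_normalized_factor 0 h).ne_zero rfl
  have hsum : (M.map natDegree).sum = m := by
    rw [← hdeg, ← hprod, natDegree_multiset_prod _ hzero]
  by_contra hirr
  have hcard2 : 2 ≤ Multiset.card M := by
    rcases Nat.lt_or_ge (Multiset.card M) 2 with h | h
    · exfalso
      interval_cases hc : (Multiset.card M)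
      · rw [Multiset.card_eq_zero.mp hc] at hprod
        simp at hprod
        rw [← hprod] at hdeg
        simp at hdeg
        omega
      · obtain ⟨q, hq⟩ := Multiset.card_eq_one.mp hc
        apply hirr
        rw [← hprod, hq, Multiset.prod_singleton]
        have hqM : q ∈ M := by rw [hq]; simp
        exact irreducible_of_normalized_factor q (hM ▸ hqM)
    · exact h
  have hdegdvd : ∀ q ∈ M, q.natDegree ∣ m ∧ 0 < q.natDegree ∧ q.natDegree < m := by
    intro q hq
    have hqirr := irreducible_of_normalized_factor q hq
    have h1 : q.natDegree ∣ m := deg_dvd_of_irred_dvd hqirr (dvd_trans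
      (dvd_of_mem_normalizedFactors hq) hdvd)
    refine ⟨h1, hqirr.natDegree_pos, ?_⟩
    -- q.natDegree < m
    obtain ⟨M', hM'⟩ := Multiset.exists_cons_of_mem hq
    have hsum' : q.natDegree + (M'.map natDegree).sum = m := by
      rw [← hsum, hM']; simp
    have hcard' : 1 ≤ Multiset.card M' := by
      have : Multiset.card M = Multiset.card M' + 1 := by rw [hM']; simp
      omega
    have hpos : Multiset.card (M'.map natDegree) • 1 ≤ (M'.map natDegree).sum := by
      apply Multiset.card_nsmul_le_sum
      intro x hx
      obtain ⟨q', hq', rfl⟩ := Multiset.mem_map.mp hx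
      have hqM : q' ∈ M := by rw [hM']; simp [hq']
      exact (irreducible_of_normalized_factor q' (hM ▸ hqM)).natDegree_pos
    simp only [smul_eq_mul, mul_one, Multiset.card_map] at hpos
    omega
  have hmonic : ∀ q ∈ M, q.Monic := fun q hq =>
    monic_of_ne_zero' (irreducible_of_normalized_factor q hq).ne_zero
  rcases hmain with ⟨hp, hodd⟩ | h9
  · -- m odd prime
    have hm3 : 3 ≤ m := by
      rcases Nat.lt_or_ge m 3 with h | h
      · interval_cases m
        · exact absurd hodd (by decide)
      · exact h
    have hdeg1 : ∀ q ∈ M, q.natDegree = 1 := by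
      intro q hq
      obtain ⟨h1, h2, h3⟩ := hdegdvd q hq
      rcases (Nat.Prime.eq_one_or_self_of_dvd hp _ h1) with h | h
      · exact h
      · omega
    have hrepl : M.map natDegree = Multiset.replicate (Multiset.card M) 1 := by
      apply Multiset.eq_replicate.mpr
      refine ⟨by rw [Multiset.card_map], ?_⟩
      intro b hb
      obtain ⟨q, hq, rfl⟩ := Multiset.mem_map.mp hb
      exact hdeg1 q hq
    have hsum2 : m = Multiset.card M := by
      rw [← hsum, hrepl, Multiset.sum_replicate, smul_eq_mul, mul_one]
    have hle2 : Multiset.card M ≤ 2 := by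
      apply nodup_card_le_two hnodup (p₁ := X) (p₂ := X + 1)
      intro q hq
      exact deg_one_char (hmonic q hq) (hdeg1 q hq)
    omega
  · -- m = 9
    subst h9
    have hdeg13 : ∀ q ∈ M, q.natDegree = 1 ∨ q.natDegree = 3 := by
      intro q hq
      obtain ⟨h1, h2, h3⟩ := hdegdvd q hq
      interval_cases hqq : q.natDegree <;> revert h1 <;> decide
    set M1 := M.filter (fun q => q.natDegree = 1) with hM1
    set M3 := M.filter (fun q => ¬ q.natDegree = 1) with hM3
    have hsplit : M1 + M3 = M := Multiset.filter_add_not _ M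
    have hc1 : Multiset.card M1 ≤ 2 := by
      apply nodup_card_le_two (hnodup.filter _) (p₁ := X) (p₂ := X + 1)
      intro q hq
      have hq' := Multiset.mem_filter.mp hq
      exact deg_one_char (hmonic q hq'.1) hq'.2
    have hc3 : Multiset.card M3 ≤ 2 := by
      apply nodup_card_le_two (hnodup.filter _) (p₁ := X ^ 3 + X + 1) (p₂ := X ^ 3 + X ^ 2 + 1)
      intro q hq
      have hq' := Multiset.mem_filter.mp hq
      have h3 : q.natDegree = 3 := by
        rcases hdeg13 q hq'.1 with h | h
        · exact absurd h hq'.2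
        · exact h
      exact deg_three_char (hmonic q hq'.1) h3 (irreducible_of_normalized_factor q hq'.1)
    have hsum1 : (M1.map natDegree).sum = Multiset.card M1 := by
      rw [show (M1.map natDegree) = Multiset.replicate (Multiset.card M1) 1 by
        apply Multiset.eq_replicate.mpr
        refine ⟨by rw [Multiset.card_map], ?_⟩
        intro b hb
        obtain ⟨q, hq, rfl⟩ := Multiset.mem_map.mp hb
        exact (Multiset.mem_filter.mp hq).2]
      rw [Multiset.sum_replicate, smul_eq_mul, mul_one]
    have hsum3 : (M3.map natDegree).sum = 3 * Multiset.card M3 := by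
      rw [show (M3.map natDegree) = Multiset.replicate (Multiset.card M3) 3 by
        apply Multiset.eq_replicate.mpr
        refine ⟨by rw [Multiset.card_map], ?_⟩
        intro b hb
        obtain ⟨q, hq, rfl⟩ := Multiset.mem_map.mp hb
        have hq' := Multiset.mem_filter.mp hq
        rcases hdeg13 q hq'.1 with h | h
        · exact absurd h hq'.2
        · exact h]
      rw [Multiset.sum_replicate, smul_eq_mul]
      ring
    have htot : (M1.map natDegree).sum + (M3.map natDegree).sum = 9 := by
      rw [← hsum, ← hsplit]
      simp [Multiset.map_add]
    omega

/-- For an integer `m ≥ 2`, every polynomial `f ∈ 𝔽₂[X]` of degree `m`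
satisfies "`f ∣ X^(2^m) - X` iff `f` is irreducible" if and only if `m` is an odd prime
or `m = 9`. -/
theorem stmt_0 (m : ℕ) (hm : 2 ≤ m) :
    (∀ f : Polynomial (ZMod 2), f.natDegree = m →
      (f ∣ X ^ 2 ^ m - X ↔ Irreducible f)) ↔ (m.Prime ∧ Odd m) ∨ m = 9 := by
  constructor
  · intro H
    by_contra hnot
    have hcex : ∃ f : (ZMod 2)[X], f.natDegree = m ∧ f ∣ X ^ 2 ^ m - X ∧ ¬ Irreducible f := by
      rcases Nat.even_or_odd m with heven | hodd
      · -- m even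
        obtain ⟨t, ht⟩ := heven
        rcases show m = 2 ∨ m = 4 ∨ 6 ≤ m by omega with h | h | h
        · obtain ⟨f, h1, h2, h3⟩ := construct (m := m) (d := 1) (k := 2) one_ne_zero
            (by omega) le_rfl (by norm_num)
          exact ⟨f, by omega, h2, h3⟩
        · refine ⟨X ^ 2 ^ 2 - X, ?_, ?_, ?_⟩
          · rw [FiniteField.X_pow_card_pow_sub_X_natDegree_eq (ZMod 2) two_ne_zero one_lt_two]
            omega
          · have := pow_sub_dvd (show 2 ∣ m by omega)
            simpa using this
          · rw [Xq_sub_X_eq 2]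
            intro hirr
            rcases hirr.isUnit_or_isUnit rfl with h' | h'
            · exact Polynomial.not_isUnit_X h'
            · have := natDegree_eq_zero_of_isUnit h'
              rw [← C_1, natDegree_X_pow_sub_C] at this
              norm_num at this
        · obtain ⟨f, h1, h2, h3⟩ := construct (m := m) (d := m / 2) (k := 2)
            (by omega) ⟨2, by omega⟩ le_rfl (k2_ineq (by omega))
          exact ⟨f, by omega, h2, h3⟩
      · -- m odd
        have hnp : ¬ m.Prime := fun hp => hnot (Or.inl ⟨hp, hodd⟩)
        have h9 : m ≠ 9 := fun h => hnot (Or.inr h)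
        set p := m.minFac with hp
        have hpp : p.Prime := Nat.minFac_prime (by omega)
        have hpdvd : p ∣ m := Nat.minFac_dvd m
        have hp2 : p ≠ 2 := by
          intro h
          rw [h] at hpdvd
          exact (Nat.not_even_iff_odd.mpr hodd) ((even_iff_two_dvd).mpr hpdvd)
        have hp3 : 3 ≤ p := by have := hpp.two_le; omega
        set d := m / p with hd
        have hdm : d ∣ m := Nat.div_dvd_of_dvd hpdvd
        have hpd : p * d = m := Nat.mul_div_cancel' hpdvd
        have hple : p ≤ d := by
          rw [hd, hp]
          exact Nat.minFac_le_div (by omega) hnp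
        have hd2 : ¬ 2 ∣ d := by
          intro h
          exact (Nat.not_even_iff_odd.mpr hodd) ((even_iff_two_dvd).mpr (h.trans hdm))
        have hd5 : 5 ≤ d := by
          rcases Nat.lt_or_ge d 5 with h | h
          · exfalso
            have hd3 : d = 3 := by omega
            have hp3' : p = 3 := by omega
            rw [hd3, hp3'] at hpd
            omega
          · exact h
        have hd0 : 0 < d := Nat.div_pos (Nat.minFac_le (by omega)) hpp.pos
        obtain ⟨f, h1, h2, h3⟩ := construct (m := m) (d := d) (k := p) (by omega) hdm
          hpp.two_le (main_ineq hd5 hple)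
        exact ⟨f, by rw [h1, hpd], h2, h3⟩
    obtain ⟨f, h1, h2, h3⟩ := hcex
    exact h3 ((H f h1).mp h2)
  · intro hmain f hdeg
    constructor
    · exact dvd_imp_irred hm hmain hdeg
    · intro hirr
      exact irred_dvd_of_deg_dvd hirr (by rw [hdeg])
end

section
/- Let m ≥ 2 be an integer. If property P₂ holds for m, then m can be written as m = p^i or m = p^i·q for primes p < q and a positive integer i (i.e., m is either a prime power, or the product of a prime power p^i and a larger prime q). -/
open Polynomial

namespace Stmt1Aux

lemma pow_pow_mul_fix {K : Type*} [Monoid K] {x : K} {a : ℕ} (h : x ^ 2 ^ a = x) (k : ℕ) :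
    x ^ 2 ^ (a * k) = x := by
  induction k with
  | zero => simp
  | succ k ih => rw [Nat.mul_succ, pow_add, pow_mul, ih, h]

lemma pow_pow_gcd_fix {K : Type*} [Monoid K] (x : K) :
    ∀ a b : ℕ, x ^ 2 ^ a = x → x ^ 2 ^ b = x → x ^ 2 ^ Nat.gcd a b = x := by
  intro a b
  induction a, b using Nat.gcd.induction with
  | H0 n => intro _ hb; simpa using hb
  | H1 m n hm ih =>
      intro h1 h2
      rw [Nat.gcd_rec]
      refine ih ?_ h1
      have hsplit : n = m * (n / m) + n % m := (Nat.div_add_mod n m).symm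
      have hx : x ^ 2 ^ (m * (n / m)) = x := pow_pow_mul_fix h1 _
      calc x ^ 2 ^ (n % m) = (x ^ 2 ^ (m * (n / m))) ^ 2 ^ (n % m) := by rw [hx]
        _ = x ^ (2 ^ (m * (n / m)) * 2 ^ (n % m)) := by rw [← pow_mul]
        _ = x ^ 2 ^ (m * (n / m) + n % m) := by rw [pow_add]
        _ = x := by rw [← hsplit, h2]

lemma adjoinRoot_fix {g : Polynomial (ZMod 2)} [Fact (Irreducible g)] (e : ℕ)
    (hr : (AdjoinRoot.root g) ^ 2 ^ e = AdjoinRoot.root g) (z : AdjoinRoot g) :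
    z ^ 2 ^ e = z := by
  haveI : CharP (AdjoinRoot g) 2 := charP_of_injective_algebraMap
    (algebraMap (ZMod 2) (AdjoinRoot g)).injective 2
  obtain ⟨P, rfl⟩ := AdjoinRoot.mk_surjective z
  rw [← AdjoinRoot.aeval_eq]
  induction P using Polynomial.induction_on' with
  | add p q hp hq =>
      rw [map_add, add_pow_char_pow, hp, hq]
  | monomial n c =>
      rw [aeval_monomial, mul_pow, ← pow_right_comm, hr, ← map_pow]
      rw [ZMod.pow_card_pow]

lemma irred_dvd_iff {g : Polynomial (ZMod 2)} (hg : Irreducible g) (hmo : g.Monic)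
    {n : ℕ} (hn : 0 < n) :
    g ∣ X ^ 2 ^ n - X ↔ g.natDegree ∣ n := by
  haveI : Fact (Irreducible g) := ⟨hg⟩
  have hne : g ≠ 0 := hg.ne_zero
  set d := g.natDegree with hd_def
  have hd : 0 < d := hg.natDegree_pos
  set K := AdjoinRoot g
  set r : K := AdjoinRoot.root g with hr_def
  letI : Fintype K := Module.fintypeOfFintype (AdjoinRoot.powerBasis hne).basis
  have hcard : Fintype.card K = 2 ^ d := by
    rw [Module.card_eq_pow_finrank (K := ZMod 2) (V := K), ZMod.card,
      (AdjoinRoot.powerBasis hne).finrank]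
    rfl
  have hrd : r ^ 2 ^ d = r := by
    have := FiniteField.pow_card r
    rwa [hcard] at this
  have hming : minpoly (ZMod 2) r = g := by
    rw [hr_def, AdjoinRoot.minpoly_root hne, hmo.leadingCoeff, inv_one, map_one, mul_one]
  constructor
  · intro hdvd
    -- r ^ 2 ^ n = r
    have hrn : r ^ 2 ^ n = r := by
      obtain ⟨h', heq⟩ := hdvd
      have h0 : (aeval r) (g * h') = 0 := by
        rw [map_mul, AdjoinRoot.aeval_eq, AdjoinRoot.mk_self, zero_mul]
      rw [← heq, map_sub, map_pow, aeval_X, sub_eq_zero] at h0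
      exact h0
    have hgcd : r ^ 2 ^ Nat.gcd n d = r := pow_pow_gcd_fix r n d hrn hrd
    have hall : ∀ z : K, z ^ 2 ^ Nat.gcd n d = z := adjoinRoot_fix _ hgcd
    -- counting roots
    have hg1 : 1 < 2 ^ Nat.gcd n d := by
      have : 0 < Nat.gcd n d := Nat.gcd_pos_of_pos_right n hd
      exact Nat.one_lt_two_pow this.ne'
    set P : K[X] := X ^ 2 ^ Nat.gcd n d - X with hP
    have hPne : P ≠ 0 := FiniteField.X_pow_card_sub_X_ne_zero K hg1
    have hPdeg : P.natDegree = 2 ^ Nat.gcd n d :=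
      FiniteField.X_pow_card_sub_X_natDegree_eq K hg1
    have hsub : Finset.univ ⊆ P.roots.toFinset := by
      intro z _
      rw [Multiset.mem_toFinset, mem_roots hPne]
      simp [hP, IsRoot, sub_eq_zero, hall z]
    have hcount : 2 ^ d ≤ 2 ^ Nat.gcd n d := by
      calc 2 ^ d = Fintype.card K := hcard.symm
        _ = Finset.univ.card := rfl
        _ ≤ P.roots.toFinset.card := Finset.card_le_card hsub
        _ ≤ Multiset.card P.roots := Multiset.toFinset_card_le _
        _ ≤ P.natDegree := P.card_roots'
        _ = 2 ^ Nat.gcd n d := hPdeg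
    have hdle : d ≤ Nat.gcd n d := by
      exact (Nat.pow_le_pow_iff_right (le_refl 2)).mp hcount
    have : Nat.gcd n d = d := le_antisymm (Nat.gcd_le_right _ hd) hdle
    exact this ▸ Nat.gcd_dvd_left n d
  · rintro ⟨s, rfl⟩
    have hrn : r ^ 2 ^ (d * s) = r := pow_pow_mul_fix hrd s
    have : (aeval r) (X ^ 2 ^ (d * s) - X : (ZMod 2)[X]) = 0 := by
      rw [map_sub, map_pow, aeval_X, hrn, sub_self]
    have := minpoly.dvd (ZMod 2) r this
    rwa [hming] at this


lemma geom_sum_Icc (n : ℕ) : ∑ e ∈ Finset.Icc 1 n, 2 ^ e = 2 ^ (n + 1) - 2 := by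
  induction n with
  | zero => simp
  | succ n ih =>
      rw [Finset.sum_Icc_succ_top (by omega), ih]
      have h1 : 2 ≤ 2 ^ (n + 1) := Nat.one_lt_two_pow (by omega)
      have h2 : 2 ^ (n + 2) = 2 ^ (n + 1) + 2 ^ (n + 1) := by ring
      omega

lemma exists_irreducibles (d k : ℕ) (hd : 0 < d)
    (hbound : k * d + 2 ^ (d / 2 + 1) ≤ 2 ^ d + 2) :
    ∃ s : Finset (Polynomial (ZMod 2)), k ≤ s.card ∧
      ∀ g ∈ s, g.Monic ∧ Irreducible g ∧ g.natDegree = d := by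
  classical
  set K := GaloisField 2 d with hK
  letI : Fintype K := Fintype.ofFinite K
  have hcardK : Fintype.card K = 2 ^ d := by
    rw [← Nat.card_eq_fintype_card, GaloisField.card 2 d hd.ne']
  have hfinrank : Module.finrank (ZMod 2) K = d := GaloisField.finrank 2 hd.ne'
  have hint : ∀ x : K, IsIntegral (ZMod 2) x := fun x => IsIntegral.of_finite _ x
  -- the good set
  set good : Finset K := Finset.univ.filter (fun x => (minpoly (ZMod 2) x).natDegree = d)
    with hgood
  -- bad elements are fixed by a small Frobenius power
  have hbad_mem : ∀ x : K, (minpoly (ZMod 2) x).natDegree ≠ d →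
      ∃ e ∈ (d.divisors).erase d, x ^ 2 ^ e = x := by
    intro x hx
    set e := (minpoly (ZMod 2) x).natDegree with he
    have hedvd : e ∣ d := by
      have := minpoly.degree_dvd (hint x)
      rwa [hfinrank] at this
    have hepos : 0 < e := minpoly.natDegree_pos (hint x)
    refine ⟨e, ?_, ?_⟩
    · rw [Finset.mem_erase, Nat.mem_divisors]
      exact ⟨hx, hedvd, hd.ne'⟩
    · -- x lives in the subfield (ZMod 2)⟮x⟯ of cardinality 2 ^ e
      set L := IntermediateField.adjoin (ZMod 2) {x} with hL
      letI : Fintype L := Fintype.ofFinite L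
      have hrank : Module.finrank (ZMod 2) L = e :=
        IntermediateField.adjoin.finrank (hint x)
      have hcardL : Fintype.card L = 2 ^ e := by
        rw [Module.card_eq_pow_finrank (K := ZMod 2) (V := L), ZMod.card, hrank]
      have hxL : x ∈ L := IntermediateField.mem_adjoin_simple_self (ZMod 2) x
      have : (⟨x, hxL⟩ : L) ^ 2 ^ e = ⟨x, hxL⟩ := by
        have := FiniteField.pow_card (⟨x, hxL⟩ : L)
        rwa [hcardL] at this
      have := congrArg (Subtype.val) this
      simpa using this
  -- cardinality of the bad set
  have hbad_card : (Finset.univ.filter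
      (fun x : K => (minpoly (ZMod 2) x).natDegree ≠ d)).card ≤ 2 ^ (d / 2 + 1) - 2 := by
    have hsub : (Finset.univ.filter (fun x : K => (minpoly (ZMod 2) x).natDegree ≠ d)) ⊆
        ((d.divisors).erase d).biUnion
          (fun e => Finset.univ.filter (fun x : K => x ^ 2 ^ e = x)) := by
      intro x hx
      rw [Finset.mem_filter] at hx
      obtain ⟨e, he, hfix⟩ := hbad_mem x hx.2
      exact Finset.mem_biUnion.mpr ⟨e, he, Finset.mem_filter.mpr ⟨Finset.mem_univ _, hfix⟩⟩
    calc (Finset.univ.filter (fun x : K => (minpoly (ZMod 2) x).natDegree ≠ d)).card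
        ≤ _ := Finset.card_le_card hsub
      _ ≤ ∑ e ∈ (d.divisors).erase d,
            (Finset.univ.filter (fun x : K => x ^ 2 ^ e = x)).card :=
          Finset.card_biUnion_le
      _ ≤ ∑ e ∈ (d.divisors).erase d, 2 ^ e := by
          refine Finset.sum_le_sum ?_
          intro e he
          rw [Finset.mem_erase, Nat.mem_divisors] at he
          have hepos : 0 < e := Nat.pos_of_dvd_of_pos he.2.1 hd
          have h1e : 1 < 2 ^ e := Nat.one_lt_two_pow hepos.ne'
          have hPne : (X ^ 2 ^ e - X : K[X]) ≠ 0 := FiniteField.X_pow_card_sub_X_ne_zero K h1e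
          calc (Finset.univ.filter (fun x : K => x ^ 2 ^ e = x)).card
              ≤ (X ^ 2 ^ e - X : K[X]).roots.toFinset.card := by
                refine Finset.card_le_card ?_
                intro x hx
                rw [Finset.mem_filter] at hx
                rw [Multiset.mem_toFinset, mem_roots hPne]
                simp [IsRoot, sub_eq_zero, hx.2]
            _ ≤ Multiset.card (X ^ 2 ^ e - X : K[X]).roots := Multiset.toFinset_card_le _
            _ ≤ (X ^ 2 ^ e - X : K[X]).natDegree := Polynomial.card_roots' _
            _ = 2 ^ e := FiniteField.X_pow_card_sub_X_natDegree_eq K h1e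
      _ ≤ ∑ e ∈ Finset.Icc 1 (d / 2), 2 ^ e := by
          refine Finset.sum_le_sum_of_subset ?_
          intro e he
          rw [Finset.mem_erase, Nat.mem_divisors] at he
          obtain ⟨hne, hdvd, _⟩ := he
          have hepos : 0 < e := Nat.pos_of_dvd_of_pos hdvd hd
          have hele : e ≤ d / 2 := by
            obtain ⟨c, hc⟩ := hdvd
            have hc2 : 2 ≤ c := by
              rcases Nat.lt_or_ge c 2 with h | h
              · interval_cases c <;> omega
              · exact h
            have : e * 2 ≤ d := by nlinarith
            omega
          exact Finset.mem_Icc.mpr ⟨hepos, hele⟩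
      _ = 2 ^ (d / 2 + 1) - 2 := geom_sum_Icc _
  have hgood_card : k * d ≤ good.card := by
    have htot := Finset.card_filter_add_card_filter_not
      (s := (Finset.univ : Finset K)) (p := fun x => (minpoly (ZMod 2) x).natDegree = d)
    rw [Finset.card_univ, hcardK] at htot
    simp only [ne_eq, ← hgood] at htot hbad_card ⊢
    have h2 : 2 ≤ 2 ^ (d / 2 + 1) := Nat.one_lt_two_pow (by omega)
    omega
  -- image under minpoly
  set I : Finset (Polynomial (ZMod 2)) := good.image (minpoly (ZMod 2)) with hI
  have hfiber : good.card ≤ d * I.card := by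
    refine Finset.card_le_mul_card_image good d ?_
    intro μ hμ
    rw [Finset.mem_image] at hμ
    obtain ⟨x₀, hx₀, rfl⟩ := hμ
    rw [Finset.mem_filter] at hx₀
    have hμne : minpoly (ZMod 2) x₀ ≠ 0 := (minpoly.monic (hint x₀)).ne_zero
    calc (good.filter (fun x => minpoly (ZMod 2) x = minpoly (ZMod 2) x₀)).card
        ≤ ((minpoly (ZMod 2) x₀).aroots K).toFinset.card := by
          refine Finset.card_le_card ?_
          intro x hx
          rw [Finset.mem_filter] at hx
          rw [Multiset.mem_toFinset, mem_aroots]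
          exact ⟨hμne, hx.2 ▸ minpoly.aeval _ _⟩
      _ ≤ Multiset.card ((minpoly (ZMod 2) x₀).aroots K) := Multiset.toFinset_card_le _
      _ ≤ ((minpoly (ZMod 2) x₀).map (algebraMap (ZMod 2) K)).natDegree :=
          Polynomial.card_roots' _
      _ = (minpoly (ZMod 2) x₀).natDegree := natDegree_map _
      _ = d := hx₀.2
  refine ⟨I, ?_, ?_⟩
  · have : k * d ≤ d * I.card := le_trans hgood_card hfiber
    rw [mul_comm d I.card] at this
    exact Nat.le_of_mul_le_mul_right this hd
  · intro g hg
    rw [hI, Finset.mem_image] at hg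
    obtain ⟨x, hx, rfl⟩ := hg
    rw [hgood, Finset.mem_filter] at hx
    exact ⟨minpoly.monic (hint x), minpoly.irreducible (hint x), hx.2⟩


lemma sq_le_pow (d : ℕ) (hd : 6 ≤ d) : d * d ≤ 3 * 2 ^ (d - 2) := by
  induction d with
  | zero => omega
  | succ n ih =>
      rcases Nat.lt_or_ge n 6 with h | h
      · have hn : n = 5 := by omega
        subst hn; norm_num
      · have hih := ih (by omega)
        have hstep : (n + 1) * (n + 1) ≤ 2 * (n * n) := by nlinarith
        have h2 : 2 ^ (n + 1 - 2) = 2 * 2 ^ (n - 2) := by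
          have : n + 1 - 2 = (n - 2) + 1 := by omega
          rw [this, pow_succ]; ring
        calc (n + 1) * (n + 1) ≤ 2 * (n * n) := hstep
          _ ≤ 2 * (3 * 2 ^ (n - 2)) := by omega
          _ = 3 * 2 ^ (n + 1 - 2) := by rw [h2]; ring

lemma bound_ok {d k : ℕ} (hd : 0 < d) (h : k ≤ 1 ∨ (k ≤ d ∧ 5 ≤ d)) :
    k * d + 2 ^ (d / 2 + 1) ≤ 2 ^ d + 2 := by
  have main : ∀ d' : ℕ, 5 ≤ d' → d' * d' + 2 ^ (d' / 2 + 1) ≤ 2 ^ d' + 2 := by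
    intro d' hd'
    rcases Nat.lt_or_ge d' 6 with h6 | h6
    · interval_cases d' <;> norm_num
    · have h1 : d' / 2 + 1 ≤ d' - 2 := by omega
      have h2 : 2 ^ (d' / 2 + 1) ≤ 2 ^ (d' - 2) := Nat.pow_le_pow_right (by norm_num) h1
      have h3 : d' * d' ≤ 3 * 2 ^ (d' - 2) := sq_le_pow d' h6
      have h4 : 2 ^ d' = 2 ^ (d' - 2) * 4 := by
        have hh : d' = (d' - 2) + 2 := by omega
        nth_rewrite 1 [hh]
        rw [pow_add]; norm_num
      omega
  rcases h with hk | ⟨hk, hd5⟩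
  · rcases Nat.lt_or_ge d 5 with h5 | h5
    · have hkd : k * d ≤ d := by
        calc k * d ≤ 1 * d := Nat.mul_le_mul_right d hk
          _ = d := one_mul d
      interval_cases d <;> simp_all <;> omega
    · have := main d h5
      have hkd : k * d ≤ d * d := Nat.mul_le_mul_right d (by omega)
      omega
  · have := main d hd5
    have hkd : k * d ≤ d * d := Nat.mul_le_mul_right d hk
    omega


lemma nt_decomp (m : ℕ) (hm : 2 ≤ m)
    (h1 : ¬ ∃ p i : ℕ, p.Prime ∧ 0 < i ∧ m = p ^ i)
    (h2 : ¬ ∃ p q i : ℕ, p.Prime ∧ q.Prime ∧ p < q ∧ 0 < i ∧ m = p ^ i * q) :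
    ∃ p q t : ℕ, p.Prime ∧ q.Prime ∧ p < q ∧ q ≤ t ∧ m = p * q * t := by
  have hm0 : m ≠ 0 := by omega
  set p := m.minFac with hp_def
  have hp : p.Prime := Nat.minFac_prime (by omega)
  have hpdvd : p ∣ m := Nat.minFac_dvd m
  set e := m.factorization p with he_def
  have he : 0 < e := hp.factorization_pos_of_dvd hm0 hpdvd
  set M := m / p ^ e with hM_def
  have hMsplit : p ^ e * M = m := Nat.ordProj_mul_ordCompl_eq_self m p
  have hM0 : M ≠ 0 := by
    intro h; rw [h, mul_zero] at hMsplit; omega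
  have hpM : ¬ p ∣ M := Nat.not_dvd_ordCompl hp hm0
  have hM1 : M ≠ 1 := by
    intro h
    exact h1 ⟨p, e, hp, he, by rw [← hMsplit, h, mul_one]⟩
  have hM2 : 2 ≤ M := lt_of_le_of_ne (Nat.one_le_iff_ne_zero.mpr hM0) (Ne.symm hM1)
  set q := M.minFac with hq_def
  have hq : q.Prime := Nat.minFac_prime hM1
  have hqdvdM : q ∣ M := Nat.minFac_dvd M
  have hqdvdm : q ∣ m := hqdvdM.trans ⟨p ^ e, by rw [← hMsplit]; ring⟩
  have hpq : p < q := by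
    have hle : p ≤ q := Nat.minFac_le_of_dvd hq.two_le hqdvdm
    have hne : p ≠ q := by
      intro h; rw [h] at hpM; exact hpM hqdvdM
    omega
  -- now analyze M = q ^ f * M'
  set f := M.factorization q with hf_def
  have hf : 0 < f := hq.factorization_pos_of_dvd hM0 hqdvdM
  set M' := M / q ^ f with hM'_def
  have hM'split : q ^ f * M' = M := Nat.ordProj_mul_ordCompl_eq_self M q
  have hM'0 : M' ≠ 0 := by
    intro h; rw [h, mul_zero] at hM'split; omega
  have hqM' : ¬ q ∣ M' := Nat.not_dvd_ordCompl hq hM0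
  -- find a prime r ≥ q dividing M / q
  obtain ⟨r, hr, hrq, hrdvd⟩ : ∃ r : ℕ, r.Prime ∧ q ≤ r ∧ r ∣ M / q := by
    rcases Nat.lt_or_ge f 2 with hf1 | hf2
    · -- f = 1
      have hf1' : f = 1 := by omega
      have hMq : M / q = M' := by
        rw [← hM'split, hf1', pow_one, Nat.mul_div_cancel_left _ hq.pos]
      rcases Nat.eq_or_lt_of_le (Nat.one_le_iff_ne_zero.mpr hM'0) with hM'1 | hM'2
      · -- M' = 1 : m = p ^ e * q, contradiction
        exfalso
        refine h2 ⟨p, q, e, hp, hq, hpq, he, ?_⟩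
        rw [← hMsplit, ← hM'split, hf1', ← hM'1, pow_one, mul_one]
      · refine ⟨M'.minFac, Nat.minFac_prime (by omega), ?_, ?_⟩
        · exact Nat.minFac_le_of_dvd (Nat.minFac_prime (by omega)).two_le
            ((M'.minFac_dvd).trans ⟨q ^ f, by rw [← hM'split]; ring⟩)
        · rw [hMq]; exact M'.minFac_dvd
    · -- f ≥ 2 : q divides M / q
      refine ⟨q, hq, le_refl q, ?_⟩
      have : q * q ∣ M := by
        have : q ^ 2 ∣ q ^ f := pow_dvd_pow q hf2
        rw [pow_two] at this
        exact this.trans ⟨M', hM'split.symm⟩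
      obtain ⟨c, hc⟩ := this
      refine ⟨c, ?_⟩
      rw [hc, mul_assoc, Nat.mul_div_cancel_left _ hq.pos]
  -- assemble t
  obtain ⟨w, hw⟩ := hqdvdM
  have hMq : M / q = w := by rw [hw, Nat.mul_div_cancel_left _ hq.pos]
  refine ⟨p, q, p ^ (e - 1) * w, hp, hq, hpq, ?_, ?_⟩
  · have hrw : r ∣ w := by rwa [hMq] at hrdvd
    have hw0 : w ≠ 0 := by rintro rfl; rw [mul_zero] at hw; exact hM0 hw
    have : r ≤ w := Nat.le_of_dvd (by omega) hrw
    calc q ≤ r := hrq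
      _ ≤ w := this
      _ ≤ p ^ (e - 1) * w := Nat.le_mul_of_pos_left w (pow_pos hp.pos _)
  · rw [← hMsplit, hw]
    have hpe : p ^ e = p * p ^ (e - 1) := by
      nth_rewrite 1 [show e = 1 + (e - 1) by omega]
      rw [pow_add, pow_one]
    rw [hpe]; ring

lemma exists_irreducibles_card (d k : ℕ) (hd : 0 < d)
    (h : k ≤ 1 ∨ (k ≤ d ∧ 5 ≤ d)) :
    ∃ s : Finset (Polynomial (ZMod 2)), s.card = k ∧
      ∀ g ∈ s, g.Monic ∧ Irreducible g ∧ g.natDegree = d := by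
  obtain ⟨s, hcard, hs⟩ := exists_irreducibles d k hd (bound_ok hd h)
  obtain ⟨s', hsub, hcard'⟩ := Finset.exists_subset_card_eq hcard
  exact ⟨s', hcard', fun g hg => hs g (hsub hg)⟩


end Stmt1Aux

open Stmt1Aux

/-- The order of a nonzero squarefree `f ∈ 𝔽₂[X]`: the least positive integer `n`
with `f ∣ X^(2^n) - X`.  "`o(f) = m`" is expressed via `IsLeast`. -/
def P2 (m : ℕ) : Prop :=
  ∀ f : Polynomial (ZMod 2), Squarefree f → f.natDegree = m →
    IsLeast {n : ℕ | 0 < n ∧ f ∣ X ^ 2 ^ n - X} m → Irreducible f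

/-- If property `P₂` holds for `m ≥ 2`, then `m = p^i` or `m = p^i * q`
for primes `p < q` and a positive integer `i`. -/
theorem stmt_1 (m : ℕ) (hm : 2 ≤ m) (hP2 : P2 m) :
    (∃ p i : ℕ, p.Prime ∧ 0 < i ∧ m = p ^ i) ∨
    (∃ p q i : ℕ, p.Prime ∧ q.Prime ∧ p < q ∧ 0 < i ∧ m = p ^ i * q) := by
  by_contra hcon
  rw [not_or] at hcon
  obtain ⟨h1, h2⟩ := hcon
  obtain ⟨p, q, t, hp, hq, hpq, hqt, hmeq⟩ := nt_decomp m hm h1 h2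
  classical
  have hp2 : 2 ≤ p := hp.two_le
  have hq3 : 3 ≤ q := by
    have := hq.two_le; omega
  have ht3 : 3 ≤ t := le_trans hq3 hqt
  have hq5 : p ≠ 2 → 5 ≤ q := by
    intro hne
    have hp3 : 3 ≤ p := by
      rcases hp.eq_two_or_odd with h | h
      · exact absurd h hne
      · omega
    have hq4 : 4 ≤ q := by omega
    have : q ≠ 4 := by
      intro h; rw [h] at hq; norm_num at hq
    omega
  -- the three packs of irreducible polynomials
  obtain ⟨s₁, hs₁card, hs₁⟩ := exists_irreducibles_card (q * t) (p - 1)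
    (by positivity) (by
      by_cases hcase : p = 2
      · left; omega
      · right
        have h5 := hq5 hcase
        constructor
        · have : p ≤ q * t := le_trans (le_of_lt hpq) (Nat.le_mul_of_pos_right q (by omega))
          omega
        · have : 5 * 1 ≤ q * t := Nat.mul_le_mul h5 (by omega)
          omega)
  obtain ⟨s₂, hs₂card, hs₂⟩ := exists_irreducibles_card (p * t) (q / p)
    (by positivity) (by
      right
      constructor
      · calc q / p ≤ q := Nat.div_le_self q p
          _ ≤ t := hqt
          _ ≤ p * t := Nat.le_mul_of_pos_left t (by omega)
      · have : 2 * 3 ≤ p * t := Nat.mul_le_mul hp2 ht3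
        omega)
  obtain ⟨s₃, hs₃card, hs₃⟩ := exists_irreducibles_card t (q % p)
    (by omega) (by
      by_cases hcase : p = 2
      · left
        subst hcase
        omega
      · right
        have h5 := hq5 hcase
        have hcp : q % p < p := Nat.mod_lt q (by omega)
        constructor
        · omega
        · omega)
  -- assemble the counterexample polynomial
  set S : Finset (Polynomial (ZMod 2)) := (s₁ ∪ s₂) ∪ s₃ with hS
  have ht0 : 0 < t := by omega
  have hdeg_ne₁₂ : q * t ≠ p * t := by
    intro h
    exact (by omega : p ≠ q) (Nat.eq_of_mul_eq_mul_right ht0 h).symm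
  have hdeg_ne₁₃ : q * t ≠ t := by
    intro h
    nth_rewrite 2 [← one_mul t] at h
    exact (by omega : q ≠ 1) (Nat.eq_of_mul_eq_mul_right ht0 h)
  have hdeg_ne₂₃ : p * t ≠ t := by
    intro h
    nth_rewrite 2 [← one_mul t] at h
    exact (by omega : p ≠ 1) (Nat.eq_of_mul_eq_mul_right ht0 h)
  have hd₁₂ : Disjoint s₁ s₂ := by
    rw [Finset.disjoint_left]
    intro g hg1 hg2
    exact hdeg_ne₁₂ (((hs₁ g hg1).2.2).symm.trans ((hs₂ g hg2).2.2))
  have hd₁₃ : Disjoint s₁ s₃ := by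
    rw [Finset.disjoint_left]
    intro g hg1 hg2
    exact hdeg_ne₁₃ (((hs₁ g hg1).2.2).symm.trans ((hs₃ g hg2).2.2))
  have hd₂₃ : Disjoint s₂ s₃ := by
    rw [Finset.disjoint_left]
    intro g hg1 hg2
    exact hdeg_ne₂₃ (((hs₂ g hg1).2.2).symm.trans ((hs₃ g hg2).2.2))
  have hinfo : ∀ g ∈ S, g.Monic ∧ Irreducible g ∧ g.natDegree ∣ m := by
    intro g hg
    rw [hS, Finset.mem_union, Finset.mem_union] at hg
    rcases hg with (hg | hg) | hg
    · obtain ⟨hm1, hm2, hm3⟩ := hs₁ g hg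
      exact ⟨hm1, hm2, by rw [hm3, hmeq]; exact ⟨p, by ring⟩⟩
    · obtain ⟨hm1, hm2, hm3⟩ := hs₂ g hg
      exact ⟨hm1, hm2, by rw [hm3, hmeq]; exact ⟨q, by ring⟩⟩
    · obtain ⟨hm1, hm2, hm3⟩ := hs₃ g hg
      exact ⟨hm1, hm2, by rw [hm3, hmeq]; exact ⟨p * q, by ring⟩⟩
  set f : Polynomial (ZMod 2) := ∏ g ∈ S, g with hf
  -- degree of f
  have key : (p - 1) * (q * t) + (q / p) * (p * t) + (q % p) * t = p * q * t := by
    have h1 : q / p * p + q % p = q := Nat.div_add_mod' q p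
    have hle : q ≤ p * q := Nat.le_mul_of_pos_left q (by omega)
    have h2 : (p - 1) * q = p * q - q := by rw [Nat.sub_mul, one_mul]
    have h3 : (p - 1) * q + (q / p * p + q % p) = p * q := by omega
    calc (p - 1) * (q * t) + (q / p) * (p * t) + (q % p) * t
        = ((p - 1) * q + (q / p * p + q % p)) * t := by ring
      _ = (p * q) * t := by rw [h3]
  have hdegf : f.natDegree = m := by
    rw [hf, Polynomial.natDegree_prod _ _ (fun g hg => (hinfo g hg).2.1.ne_zero), hS,
      Finset.sum_union (Finset.disjoint_union_left.mpr ⟨hd₁₃, hd₂₃⟩),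
      Finset.sum_union hd₁₂,
      Finset.sum_const_nat (m := q * t) (fun g hg => (hs₁ g hg).2.2),
      Finset.sum_const_nat (m := p * t) (fun g hg => (hs₂ g hg).2.2),
      Finset.sum_const_nat (m := t) (fun g hg => (hs₃ g hg).2.2),
      hs₁card, hs₂card, hs₃card, hmeq]
    exact key
  -- pairwise coprimality
  have hcop : (↑S : Set (Polynomial (ZMod 2))).Pairwise
      (Function.onFun IsCoprime (id : Polynomial (ZMod 2) → Polynomial (ZMod 2))) := by
    intro g hg h hh hne
    rw [Finset.mem_coe] at hg hh
    obtain ⟨hgm, hgi, -⟩ := hinfo g hg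
    obtain ⟨hhm, hhi, -⟩ := hinfo h hh
    simp only [Function.onFun, id]
    refine (hgi.coprime_iff_not_dvd).mpr ?_
    intro hdvd
    exact hne (Polynomial.eq_of_monic_of_associated hgm hhm (hgi.associated_of_dvd hhi hdvd))
  have hfdvd : ∀ n : ℕ, 0 < n → (∀ g ∈ S, g.natDegree ∣ n) → f ∣ X ^ 2 ^ n - X := by
    intro n hn hdeg
    refine Finset.prod_dvd_of_coprime hcop ?_
    intro g hg
    obtain ⟨hgm, hgi, -⟩ := hinfo g hg
    exact (irred_dvd_iff hgi hgm hn).mpr (hdeg g hg)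
  have hm0 : 0 < m := by omega
  have hfm : f ∣ X ^ 2 ^ m - X := hfdvd m hm0 (fun g hg => by
    obtain ⟨-, -, hdvd⟩ := hinfo g hg; exact hdvd)
  -- squarefree
  have hXsf : Squarefree (X ^ 2 ^ m - X : Polynomial (ZMod 2)) :=
    (galois_poly_separable 2 (2 ^ m) (dvd_pow_self 2 hm0.ne')).squarefree
  have hsf : Squarefree f := hXsf.squarefree_of_dvd hfm
  -- elements of s₁ and s₂
  have hs₁ne : s₁.Nonempty := Finset.card_pos.mp (by rw [hs₁card]; omega)
  have hs₂ne : s₂.Nonempty := by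
    rw [← Finset.card_pos, hs₂card]
    exact Nat.div_pos (le_of_lt hpq) (by omega)
  obtain ⟨g₁, hg₁⟩ := hs₁ne
  obtain ⟨g₂, hg₂⟩ := hs₂ne
  have hg₁S : g₁ ∈ S := by rw [hS]; exact Finset.mem_union_left _ (Finset.mem_union_left _ hg₁)
  have hg₂S : g₂ ∈ S := by rw [hS]; exact Finset.mem_union_left _ (Finset.mem_union_right _ hg₂)
  have hg₁f : g₁ ∣ f := Finset.dvd_prod_of_mem _ hg₁S
  have hg₂f : g₂ ∣ f := Finset.dvd_prod_of_mem _ hg₂S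
  -- IsLeast
  have hleast : IsLeast {n : ℕ | 0 < n ∧ f ∣ X ^ 2 ^ n - X} m := by
    constructor
    · exact ⟨hm0, hfm⟩
    · rintro n ⟨hn0, hndvd⟩
      obtain ⟨hg₁m, hg₁i, hg₁d⟩ := hs₁ g₁ hg₁
      obtain ⟨hg₂m, hg₂i, hg₂d⟩ := hs₂ g₂ hg₂
      have hqt_dvd : q * t ∣ n := by
        have := (irred_dvd_iff hg₁i hg₁m hn0).mp (hg₁f.trans hndvd)
        rwa [hg₁d] at this
      have hpt_dvd : p * t ∣ n := by
        have := (irred_dvd_iff hg₂i hg₂m hn0).mp (hg₂f.trans hndvd)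
        rwa [hg₂d] at this
      have hlcm : Nat.lcm (q * t) (p * t) = p * q * t := by
        rw [Nat.lcm_mul_right, (Nat.coprime_primes hq hp).mpr (by omega) |>.lcm_eq_mul]
        ring
      have : m ∣ n := by
        rw [hmeq, ← hlcm]
        exact Nat.lcm_dvd hqt_dvd hpt_dvd
      exact Nat.le_of_dvd hn0 this
  -- contradiction
  have hIrr : Irreducible f := hP2 f hsf hdegf hleast
  have ha₁ : Associated g₁ f := (hs₁ g₁ hg₁).2.1.associated_of_dvd hIrr hg₁f
  have ha₂ : Associated g₂ f := (hs₂ g₂ hg₂).2.1.associated_of_dvd hIrr hg₂f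
  have heq : g₁ = g₂ := Polynomial.eq_of_monic_of_associated
    (hs₁ g₁ hg₁).1 (hs₂ g₂ hg₂).1 (ha₁.trans ha₂.symm)
  exact hdeg_ne₁₂ (((hs₁ g₁ hg₁).2.2).symm.trans (heq ▸ (hs₂ g₂ hg₂).2.2))
end

section
/- Let p < q be primes and i a positive integer. If q > 2^(p^i), then property P₂ holds for m = p^i·q; that is, every squarefree polynomial f ∈ 𝔽₂[X] of degree p^i·q with o(f) = p^i·q is irreducible. -/
open Polynomial

-- Auxiliary lemmas

lemma nat_aux : ∀ n d : ℕ, 0 < d → ((2:ℕ)^d - 1 ∣ 2^n - 1) → d ∣ n := by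
  intro n
  induction n using Nat.strong_induction_on with
  | _ n ih =>
    intro d hd h
    rcases lt_or_ge n d with hnd | hnd
    · have hlt : (2:ℕ)^n < 2^d := Nat.pow_lt_pow_right (by norm_num) hnd
      have h1 : (1:ℕ) ≤ 2^n := Nat.one_le_two_pow
      have hz : (2:ℕ)^n - 1 = 0 := by
        by_contra hne
        have := Nat.le_of_dvd (Nat.pos_of_ne_zero hne) h
        omega
      have h2n : (2:ℕ)^n = 1 := by omega
      have hn0 : n = 0 := by by_contra hne; have := Nat.one_lt_two_pow_iff.mpr hne; omega
      simp [hn0]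
    · have hA : (2:ℕ)^n = 2^(n-d) * 2^d := by
        rw [← pow_add]; congr 1; omega
      have hB : (1:ℕ) ≤ 2^(n-d) := Nat.one_le_two_pow
      have hC : (1:ℕ) ≤ 2^d := Nat.one_le_two_pow
      have hdvd2 : (2:ℕ)^d - 1 ∣ 2^n - 2^(n-d) := by
        refine ⟨2^(n-d), ?_⟩
        rw [hA]; rw [Nat.sub_mul, one_mul, mul_comm]
      have h3 : (2:ℕ)^d - 1 ∣ 2^(n-d) - 1 := by
        have := Nat.dvd_sub h hdvd2
        have he : (2:ℕ)^n - 1 - (2^n - 2^(n-d)) = 2^(n-d) - 1 := by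
          have : (2:ℕ)^(n-d) ≤ 2^n := Nat.pow_le_pow_right (by norm_num) (by omega)
          omega
        rwa [he] at this
      have hlt : n - d < n := by omega
      have := ih (n - d) hlt d hd h3
      have : d ∣ (n - d) + d := Nat.dvd_add this dvd_rfl
      rwa [Nat.sub_add_cancel hnd] at this

lemma poly_dvd_aux {a b : ℕ} (h : (2:ℕ)^a - 1 ∣ 2^b - 1) :
    (X ^ 2^a - X : Polynomial (ZMod 2)) ∣ X ^ 2^b - X := by
  obtain ⟨k, hk⟩ := h
  have ha : (1:ℕ) ≤ 2^a := Nat.one_le_two_pow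
  have hb : (1:ℕ) ≤ 2^b := Nat.one_le_two_pow
  have e1 : (X ^ 2^a - X : Polynomial (ZMod 2)) = X * (X ^ (2^a - 1) - 1) := by
    rw [mul_sub, mul_one, ← pow_succ', Nat.sub_add_cancel ha]
  have e2 : (X ^ 2^b - X : Polynomial (ZMod 2)) = X * (X ^ (2^b - 1) - 1) := by
    rw [mul_sub, mul_one, ← pow_succ', Nat.sub_add_cancel hb]
  rw [e1, e2]
  refine mul_dvd_mul_left X ?_
  have : (X ^ (2^b - 1) - 1 : Polynomial (ZMod 2)) = (X ^ (2^a - 1)) ^ k - 1 ^ k := by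
    rw [← pow_mul, ← hk, one_pow]
  rw [this]
  exact sub_dvd_pow_sub_pow _ _ k

lemma zmod2_ne_zero_eq_one : ∀ u : ZMod 2, u ≠ 0 → u = 1 := by decide

lemma key (r : Polynomial (ZMod 2)) (hr : Irreducible r) (n : ℕ) (hn : 0 < n) :
    r ∣ X ^ 2 ^ n - X ↔ r.natDegree ∣ n := by
  haveI : Fact (Irreducible r) := ⟨hr⟩
  haveI : Fact (Nat.Prime 2) := ⟨by norm_num⟩
  have hr0 : r ≠ 0 := hr.ne_zero
  set d := r.natDegree with hd
  have hdpos : 0 < d := hr.natDegree_pos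
  set K := AdjoinRoot r
  haveI : CharP K 2 := charP_of_injective_algebraMap (algebraMap (ZMod 2) K).injective 2
  haveI : Module.Finite (ZMod 2) K := (AdjoinRoot.powerBasis hr0).finite
  haveI : Fintype K := Module.fintypeOfFintype (AdjoinRoot.powerBasis hr0).basis
  have hcard : Fintype.card K = 2 ^ d := by
    rw [Module.card_eq_pow_finrank (K := ZMod 2) (V := K), ZMod.card,
      (AdjoinRoot.powerBasis hr0).finrank]
    rfl
  have hmin : minpoly (ZMod 2) (AdjoinRoot.root r) = r := by
    rw [AdjoinRoot.minpoly_root hr0]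
    have : r.leadingCoeff = 1 := zmod2_ne_zero_eq_one _ (leadingCoeff_ne_zero.mpr hr0)
    rw [this]; norm_num
  constructor
  · intro hdvd
    -- every element satisfies x ^ 2 ^ n = x
    have hroot : (AdjoinRoot.root r) ^ 2 ^ n = AdjoinRoot.root r := by
      obtain ⟨c, hc⟩ := hdvd
      have h0 : (aeval (AdjoinRoot.root r)) ((X : (ZMod 2)[X]) ^ 2 ^ n - X) = 0 := by
        rw [hc, map_mul]
        have hz : (aeval (AdjoinRoot.root r)) r = 0 := by
          rw [AdjoinRoot.aeval_eq, AdjoinRoot.mk_self]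
        rw [hz, zero_mul]
      rw [map_sub, map_pow, aeval_X] at h0
      exact sub_eq_zero.mp h0
    have hall : ∀ x : K, x ^ 2 ^ n = x := by
      intro x
      obtain ⟨P, rfl⟩ := AdjoinRoot.mk_surjective x
      have hx : AdjoinRoot.mk r P = aeval (AdjoinRoot.root r) P :=
        (AdjoinRoot.aeval_eq P).symm
      set φ : K →+* K := iterateFrobenius K 2 n with hφ
      have hφx : ∀ y : K, φ y = y ^ 2 ^ n := fun y => iterateFrobenius_def 2 n y
      rw [hx, ← hφx]
      show φ (eval₂ (algebraMap (ZMod 2) K) (AdjoinRoot.root r) P) = _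
      rw [hom_eval₂]
      have hcomp : φ.comp (algebraMap (ZMod 2) K) = algebraMap (ZMod 2) K :=
        RingHom.ext_zmod _ _
      rw [hcomp, hφx, hroot]
      rfl
    -- use a generator of Kˣ
    obtain ⟨g, hg⟩ := IsCyclic.exists_generator (α := Kˣ)
    have horder : orderOf g = 2 ^ d - 1 := by
      rw [orderOf_eq_card_of_forall_mem_zpowers hg, Nat.card_eq_fintype_card,
        Fintype.card_units, hcard]
    have hgpow : g ^ (2 ^ n - 1) = 1 := by
      have h1 : (g : K) ^ 2 ^ n = (g : K) := hall g
      have h2 : g ^ 2 ^ n = g := Units.ext (by push_cast [h1]; rfl)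
      have h3 : g ^ (2 ^ n - 1) * g = g := by
        rw [← pow_succ, Nat.sub_add_cancel Nat.one_le_two_pow, h2]
      have := mul_right_cancel (b := g) (h3.trans (one_mul g).symm)
      exact this
    have hdvd2 : 2 ^ d - 1 ∣ 2 ^ n - 1 := horder ▸ orderOf_dvd_of_pow_eq_one hgpow
    exact nat_aux n d hdpos hdvd2
  · intro hdn
    have h1 : r ∣ X ^ 2 ^ d - X := by
      rw [← hmin]
      apply minpoly.dvd
      rw [map_sub, map_pow, aeval_X, sub_eq_zero]
      have := FiniteField.pow_card (AdjoinRoot.root r)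
      rwa [hcard] at this
    refine h1.trans (poly_dvd_aux ?_)
    obtain ⟨k, hk⟩ := hdn
    have : (2:ℕ) ^ n - 1 = ((2:ℕ)^d) ^ k - 1 ^ k := by rw [← pow_mul, ← hk, one_pow]
    rw [this]
    exact Nat.sub_dvd_pow_sub_pow _ _ _

lemma prod_dvd_of_nodup (g : Polynomial (ZMod 2)) :
    ∀ s : Multiset (Polynomial (ZMod 2)), s.Nodup → (∀ r ∈ s, Prime r) →
    (∀ r ∈ s, normalize r = r) → (∀ r ∈ s, r ∣ g) → s.prod ∣ g := by
  intro s
  induction s using Multiset.induction_on with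
  | empty => intro _ _ _ _; simp
  | cons a s ih =>
    intro hnd hpr hnorm hdvd
    rw [Multiset.prod_cons]
    have hanotin := (Multiset.nodup_cons.mp hnd).1
    have hprod : s.prod ∣ g := ih (Multiset.nodup_cons.mp hnd).2
      (fun r hr => hpr r (Multiset.mem_cons_of_mem hr))
      (fun r hr => hnorm r (Multiset.mem_cons_of_mem hr))
      (fun r hr => hdvd r (Multiset.mem_cons_of_mem hr))
    have ha := hpr a (Multiset.mem_cons_self a s)
    have hcop : IsCoprime a s.prod := by
      rw [ha.irreducible.coprime_iff_not_dvd]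
      intro hds
      obtain ⟨b, hb, hab⟩ := ha.exists_mem_multiset_dvd hds
      have hbpr := hpr b (Multiset.mem_cons_of_mem hb)
      have hass := ha.irreducible.associated_of_dvd hbpr.irreducible hab
      have hab' : a = b := hass.eq_of_normalized
        (hnorm a (Multiset.mem_cons_self a s)) (hnorm b (Multiset.mem_cons_of_mem hb))
      exact hanotin (hab' ▸ hb)
    exact hcop.mul_dvd (hdvd a (Multiset.mem_cons_self a s)) hprod

lemma squarefree_dvd_of_factors (f g : Polynomial (ZMod 2)) (hf : Squarefree f)
    (h : ∀ r ∈ UniqueFactorizationMonoid.normalizedFactors f, r ∣ g) : f ∣ g := by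
  have hf0 : f ≠ 0 := hf.ne_zero
  have hass := UniqueFactorizationMonoid.prod_normalizedFactors hf0
  have hnd := (UniqueFactorizationMonoid.squarefree_iff_nodup_normalizedFactors hf0).mp hf
  have hdvd := prod_dvd_of_nodup g _ hnd
    (fun r hr => UniqueFactorizationMonoid.prime_of_normalized_factor r hr)
    (fun r hr => UniqueFactorizationMonoid.normalize_normalized_factor r hr) h
  exact hass.symm.dvd.trans hdvd

/-- For primes `p < q` and `i ≥ 1`, if `q > 2^(p^i)` then `P₂` holds for
`m = p^i * q`. -/
theorem stmt_7 (p q i : ℕ) (hp : p.Prime) (hq : q.Prime) (hpq : p < q) (hi : 0 < i)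
    (hbig : 2 ^ p ^ i < q) : P2 (p ^ i * q) := by
  intro f hsf hdeg hleast
  set m := p ^ i * q with hm
  have hppos : 0 < p ^ i := pow_pos hp.pos i
  have hmpos : 0 < m := Nat.mul_pos hppos hq.pos
  have hf0 : f ≠ 0 := hsf.ne_zero
  obtain ⟨⟨hm0, hfdvd⟩, hlb⟩ := hleast
  set nf := UniqueFactorizationMonoid.normalizedFactors f with hnf
  have hprime : ∀ r ∈ nf, Prime r :=
    fun r hr => UniqueFactorizationMonoid.prime_of_normalized_factor r hr
  have hnorm : ∀ r ∈ nf, normalize r = r :=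
    fun r hr => UniqueFactorizationMonoid.normalize_normalized_factor r hr
  have hmemdvd : ∀ r ∈ nf, r ∣ f :=
    fun r hr => UniqueFactorizationMonoid.dvd_of_mem_normalizedFactors hr
  have hnodup : nf.Nodup :=
    (UniqueFactorizationMonoid.squarefree_iff_nodup_normalizedFactors hf0).mp hsf
  have hdegdvd : ∀ r ∈ nf, r.natDegree ∣ m := by
    intro r hr
    exact (key r (hprime r hr).irreducible m hmpos).mp ((hmemdvd r hr).trans hfdvd)
  have hnf0 : (0 : Polynomial (ZMod 2)) ∉ nf := fun h => (hprime 0 h).ne_zero rfl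
  have hsum : (nf.map natDegree).sum = m := by
    obtain ⟨u, hu⟩ := UniqueFactorizationMonoid.prod_normalizedFactors hf0
    have hprod0 : nf.prod ≠ 0 := Multiset.prod_ne_zero hnf0
    have h1 : natDegree (nf.prod * (u : Polynomial (ZMod 2))) = m := by rw [hu, hdeg]
    rw [natDegree_mul hprod0 u.ne_zero, natDegree_eq_zero_of_isUnit u.isUnit,
      add_zero, natDegree_multiset_prod nf hnf0] at h1
    exact h1
  -- Step 1: every factor has degree divisible by q
  have hq_dvd : ∀ r ∈ nf, q ∣ r.natDegree := by
    by_contra hcon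
    push_neg at hcon
    obtain ⟨r0, hr0mem, hr0⟩ := hcon
    set T := nf.filter (fun r => ¬ q ∣ r.natDegree) with hT
    have hr0T : r0 ∈ T := Multiset.mem_filter.mpr ⟨hr0mem, hr0⟩
    have hTsub : ∀ r ∈ T, r ∈ nf := fun r hr => (Multiset.mem_filter.mp hr).1
    have hT0 : (0 : Polynomial (ZMod 2)) ∉ T := fun h => hnf0 (hTsub 0 h)
    have h1lt : 1 < 2 ^ p ^ i := Nat.one_lt_two_pow_iff.mpr hppos.ne'
    have hTdvd : ∀ r ∈ T, r ∣ (X ^ 2 ^ p ^ i - X : Polynomial (ZMod 2)) := by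
      intro r hrT
      obtain ⟨hrnf, hrq⟩ := Multiset.mem_filter.mp hrT
      have hdv : r.natDegree ∣ p ^ i := by
        have h2 := hdegdvd r hrnf
        have hcop : Nat.Coprime r.natDegree q := (hq.coprime_iff_not_dvd.mpr hrq).symm
        exact hcop.dvd_of_dvd_mul_right h2
      exact (key r (hprime r hrnf).irreducible (p ^ i) hppos).mpr hdv
    have hTprod : T.prod ∣ (X ^ 2 ^ p ^ i - X : Polynomial (ZMod 2)) :=
      prod_dvd_of_nodup _ T (hnodup.filter _)
        (fun r hr => hprime r (hTsub r hr)) (fun r hr => hnorm r (hTsub r hr)) hTdvd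
    have hXne : (X ^ 2 ^ p ^ i - X : Polynomial (ZMod 2)) ≠ 0 :=
      FiniteField.X_pow_card_sub_X_ne_zero _ h1lt
    have hTsum : (T.map natDegree).sum ≤ 2 ^ p ^ i := by
      rw [← natDegree_multiset_prod T hT0]
      exact le_trans (natDegree_le_of_dvd hTprod hXne)
        (le_of_eq (FiniteField.X_pow_card_sub_X_natDegree_eq _ h1lt))
    have hsplit : nf.filter (fun r => q ∣ r.natDegree) + T = nf :=
      Multiset.filter_add_not _ _
    have hqT : q ∣ (T.map natDegree).sum := by
      have hother : q ∣ ((nf.filter (fun r => q ∣ r.natDegree)).map natDegree).sum := by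
        refine Multiset.dvd_sum ?_
        intro x hx
        obtain ⟨r, hr, rfl⟩ := Multiset.mem_map.mp hx
        exact (Multiset.mem_filter.mp hr).2
      have htot : ((nf.filter (fun r => q ∣ r.natDegree)).map natDegree).sum
          + (T.map natDegree).sum = m := by
        rw [← Multiset.sum_add, ← Multiset.map_add, hsplit, hsum]
      have hqm : q ∣ m := Dvd.intro_left _ rfl
      rw [← htot] at hqm
      exact (Nat.dvd_add_right hother).mp hqm
    have hTlt : (T.map natDegree).sum < q := lt_of_le_of_lt hTsum hbig
    have hTzero : (T.map natDegree).sum = 0 := Nat.eq_zero_of_dvd_of_lt hqT hTlt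
    have hr0deg : r0.natDegree = 0 := by
      have hmem : r0.natDegree ∈ T.map natDegree := Multiset.mem_map_of_mem _ hr0T
      exact Multiset.sum_eq_zero_iff.mp hTzero _ hmem
    exact absurd hr0deg (hprime r0 hr0mem).irreducible.natDegree_pos.ne'
  -- Step 2
  by_cases hex : ∃ r ∈ nf, p ^ i ∣ r.natDegree
  · obtain ⟨r, hrmem, hpi⟩ := hex
    have hqd := hq_dvd r hrmem
    have hcopm : Nat.Coprime (p ^ i) q :=
      Nat.Coprime.pow_left i ((Nat.coprime_primes hp hq).mpr (Nat.ne_of_lt hpq))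
    have hmd : m ∣ r.natDegree := hcopm.mul_dvd_of_dvd_of_dvd hpi hqd
    have hrpos : 0 < r.natDegree := (hprime r hrmem).irreducible.natDegree_pos
    have hrd : r.natDegree ≤ m := hdeg ▸ natDegree_le_of_dvd (hmemdvd r hrmem) hf0
    have hrdeg : r.natDegree = m := le_antisymm hrd (Nat.le_of_dvd hrpos hmd)
    obtain ⟨s, hs⟩ := hmemdvd r hrmem
    have hs0 : s ≠ 0 := by rintro rfl; rw [mul_zero] at hs; exact hf0 hs
    have hr0' : r ≠ 0 := (hprime r hrmem).ne_zero
    have hns : natDegree f = natDegree r + natDegree s := by rw [hs, natDegree_mul hr0' hs0]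
    have hsdeg : natDegree s = 0 := by omega
    have hsu : IsUnit s := by
      rw [Polynomial.isUnit_iff_degree_eq_zero, degree_eq_natDegree hs0, hsdeg]
      rfl
    have hassoc : Associated r f := ⟨hsu.unit, by rw [IsUnit.unit_spec, ← hs]⟩
    exact hassoc.irreducible (hprime r hrmem).irreducible
  · push_neg at hex
    have hn'pos : 0 < p ^ (i - 1) * q := Nat.mul_pos (pow_pos hp.pos _) hq.pos
    have hall : ∀ r ∈ nf, r ∣ (X ^ 2 ^ (p ^ (i - 1) * q) - X : Polynomial (ZMod 2)) := by
      intro r hrmem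
      obtain ⟨c, hc⟩ := hq_dvd r hrmem
      have hcd : c ∣ p ^ i := by
        have h1 : q * c ∣ q * p ^ i := by
          rw [← hc, mul_comm q (p ^ i)]
          exact hdegdvd r hrmem
        exact (Nat.mul_dvd_mul_iff_left hq.pos).mp h1
      obtain ⟨a, ha, hceq⟩ := (Nat.dvd_prime_pow hp).mp hcd
      have hai : a < i := by
        rcases Nat.lt_or_ge a i with h | h
        · exact h
        · exfalso
          have hae : a = i := le_antisymm ha h
          apply hex r hrmem
          rw [hc, hceq, hae]
          exact Dvd.intro_left q rfl
      have hdv : r.natDegree ∣ p ^ (i - 1) * q := by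
        rw [hc, hceq, mul_comm]
        exact Nat.mul_dvd_mul (pow_dvd_pow p (by omega)) dvd_rfl
      exact (key r (hprime r hrmem).irreducible _ hn'pos).mpr hdv
    have hfd : f ∣ (X ^ 2 ^ (p ^ (i - 1) * q) - X : Polynomial (ZMod 2)) :=
      squarefree_dvd_of_factors f _ hsf hall
    have hle : m ≤ p ^ (i - 1) * q := hlb ⟨hn'pos, hfd⟩
    have hlt : p ^ (i - 1) * q < m := by
      have h1 : p ^ (i - 1) < p ^ i := Nat.pow_lt_pow_right hp.one_lt (by omega)
      exact Nat.mul_lt_mul_of_lt_of_le h1 le_rfl hq.pos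
    omega
end

section
/- Let q be an odd prime (so that p = 2, i = 1, p^i = 2 and m = 2q). Then property P₂ holds for m = 2q if and only if q > 4 (i.e., q ≥ 5). -/
open Polynomial


/-- `2^d - 1 ∣ 2^n - 1` implies `d ∣ n`. -/
lemma dvd_of_two_pow_sub_one_dvd {d : ℕ} (hd : 0 < d) :
    ∀ n : ℕ, (2 ^ d - 1 ∣ 2 ^ n - 1) → d ∣ n := by
  intro n
  induction n using Nat.strong_induction_on with
  | _ n ih =>
    intro h
    rcases Nat.lt_or_ge n d with hn | hn
    · rcases Nat.eq_zero_or_pos n with rfl | hn0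
      · exact dvd_zero d
      exfalso
      have h2n : 2 ≤ (2:ℕ) ^ n := by
        calc (2:ℕ) = 2 ^ 1 := (pow_one 2).symm
        _ ≤ 2 ^ n := Nat.pow_le_pow_right (by norm_num) hn0
      have hlt : (2:ℕ) ^ n < 2 ^ d := Nat.pow_lt_pow_right (by norm_num) hn
      have hle : 2 ^ d - 1 ≤ 2 ^ n - 1 := Nat.le_of_dvd (by omega) h
      omega
    · have ha1 : 1 ≤ (2:ℕ) ^ (n - d) := Nat.one_le_two_pow
      have hab : (2:ℕ) ^ (n - d) * 2 ^ d = 2 ^ n := by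
        rw [← pow_add]; congr 1; omega
      have hkey : (2:ℕ) ^ d - 1 ∣ 2 ^ n - 2 ^ (n - d) := by
        have hx : (2:ℕ) ^ n - 2 ^ (n - d) = 2 ^ (n - d) * (2 ^ d - 1) := by
          rw [Nat.mul_sub, hab, mul_one]
        rw [hx]
        exact dvd_mul_left _ _
      have h5 : (2:ℕ) ^ (n - d) ≤ 2 ^ n := Nat.pow_le_pow_right (by norm_num) (by omega)
      have h4 := Nat.dvd_sub h hkey
      have heq : (2:ℕ) ^ n - 1 - (2 ^ n - 2 ^ (n - d)) = 2 ^ (n - d) - 1 := by omega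
      rw [heq] at h4
      rcases Nat.eq_zero_or_pos (n - d) with h0 | hpos
      · have : n = d := by omega
        exact this ▸ dvd_refl d
      · have hdvd := ih (n - d) (by omega) h4
        have : d ∣ (n - d) + d := Nat.dvd_add hdvd dvd_rfl
        rwa [Nat.sub_add_cancel hn] at this

lemma two_pow_sub_one_dvd {d n : ℕ} (h : d ∣ n) : (2:ℕ) ^ d - 1 ∣ 2 ^ n - 1 := by
  obtain ⟨k, rfl⟩ := h
  rw [pow_mul]
  simpa using Nat.sub_dvd_pow_sub_pow (2 ^ d) 1 k

/-- squarefree polynomial divides anything divisible by all its prime factors -/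
lemma squarefree_dvd_of_forall_prime {h : (ZMod 2)[X]} :
    ∀ {f : (ZMod 2)[X]}, Squarefree f →
      (∀ p : (ZMod 2)[X], Prime p → p ∣ f → p ∣ h) → f ∣ h := by
  intro f
  induction f using UniqueFactorizationMonoid.induction_on_prime with
  | h₁ => exact fun hsf _ => absurd hsf not_squarefree_zero
  | h₂ a ha => exact fun _ _ => ha.dvd
  | h₃ a p ha hp ih =>
    intro hsf H
    have hsa : Squarefree a := Squarefree.squarefree_of_dvd (dvd_mul_left a p) hsf
    have hah : a ∣ h := ih hsa fun r hr hra => H r hr (hra.mul_left p)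
    have hph : p ∣ h := H p hp (dvd_mul_right p a)
    have hpa : ¬ p ∣ a := fun hdvd =>
      hp.not_unit (hsf p (mul_dvd_mul_left p hdvd))
    obtain ⟨t, rfl⟩ := hah
    have hpt : p ∣ t := (hp.dvd_or_dvd hph).resolve_left hpa
    obtain ⟨s, rfl⟩ := hpt
    exact ⟨s, by ring⟩

/-- An irreducible polynomial over 𝔽₂ divides `X^(2^n) - X` iff its degree divides `n`. -/
lemma irred_dvd_iff {g : (ZMod 2)[X]} (hg : Irreducible g) (n : ℕ) :
    g ∣ X ^ 2 ^ n - X ↔ g.natDegree ∣ n := by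
  haveI := Fact.mk hg
  have hg0 : g ≠ 0 := hg.ne_zero
  set K := AdjoinRoot g with hK
  haveI : Module.Finite (ZMod 2) K := (AdjoinRoot.powerBasis hg0).finite
  haveI : Finite K := Module.finite_of_finite (ZMod 2)
  cases nonempty_fintype K
  have hcard : Fintype.card K = 2 ^ g.natDegree := by
    have h1 := Module.card_eq_pow_finrank (K := ZMod 2) (V := K)
    rw [ZMod.card] at h1
    rw [h1, (AdjoinRoot.powerBasis hg0).finrank]
    rfl
  have hmk : ∀ m : ℕ, g ∣ X ^ 2 ^ m - X ↔ (AdjoinRoot.root g) ^ 2 ^ m = AdjoinRoot.root g := by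
    intro m
    rw [← AdjoinRoot.mk_eq_zero]
    rw [map_sub, map_pow, AdjoinRoot.mk_X, sub_eq_zero]
  rw [hmk]
  constructor
  · intro hr
    -- frobenius iterate is the identity
    haveI : CharP K 2 := charP_of_injective_algebraMap (algebraMap (ZMod 2) K).injective 2
    haveI : ExpChar K 2 := ExpChar.prime Nat.prime_two
    let ψ : K →ₐ[ZMod 2] K :=
      { iterateFrobenius K 2 n with
        commutes' := fun c => RingHom.congr_fun
          (RingHom.ext_zmod ((iterateFrobenius K 2 n).comp (algebraMap (ZMod 2) K))
            (algebraMap (ZMod 2) K)) c }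
    have hψ : ψ = AlgHom.id (ZMod 2) K := by
      apply AdjoinRoot.algHom_ext
      show iterateFrobenius K 2 n (AdjoinRoot.root g) = AdjoinRoot.root g
      rw [iterateFrobenius_def]
      exact hr
    have hall : ∀ x : K, x ^ 2 ^ n = x := by
      intro x
      have := AlgHom.congr_fun hψ x
      rwa [show ψ x = x ^ 2 ^ n from iterateFrobenius_def (R := K) (p := 2) n x] at this
    obtain ⟨a, ha⟩ := IsCyclic.exists_generator (α := Kˣ)
    have hord : orderOf a = Fintype.card Kˣ := by rw [orderOf_eq_card_of_forall_mem_zpowers ha, Nat.card_eq_fintype_card]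
    have hax : a ^ 2 ^ n = a := by
      ext
      rw [Units.val_pow_eq_pow_val]
      exact hall a
    have h1 : a ^ (2 ^ n - 1) = 1 := by
      have h2 : (1:ℕ) ≤ 2 ^ n := Nat.one_le_two_pow
      have : a ^ (2 ^ n - 1) * a = 1 * a := by
        rw [one_mul, ← pow_succ]
        rw [show 2 ^ n - 1 + 1 = 2 ^ n by omega]
        exact hax
      exact mul_right_cancel this
    have hdvd : 2 ^ g.natDegree - 1 ∣ 2 ^ n - 1 := by
      have := orderOf_dvd_of_pow_eq_one h1
      rwa [hord, Fintype.card_units, hcard] at this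
    exact dvd_of_two_pow_sub_one_dvd hg.natDegree_pos n hdvd
  · rintro ⟨k, rfl⟩
    have := FiniteField.pow_card_pow (K := K) k (AdjoinRoot.root g)
    rwa [hcard, ← pow_mul] at this

/-- a prime divisor of full degree forces irreducibility -/
lemma irred_of_prime_dvd_full {p f : (ZMod 2)[X]} (hp : Prime p) (hpf : p ∣ f)
    (hf0 : f ≠ 0) (hdeg : p.natDegree = f.natDegree) : Irreducible f := by
  obtain ⟨c, rfl⟩ := hpf
  have hc0 : c ≠ 0 := right_ne_zero_of_mul hf0
  have hp0 : p ≠ 0 := hp.ne_zero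
  have hmul : (p * c).natDegree = p.natDegree + c.natDegree := natDegree_mul hp0 hc0
  have hc : c.natDegree = 0 := by omega
  have hcu : IsUnit c := by
    rw [eq_C_of_natDegree_eq_zero hc]
    refine isUnit_C.mpr (isUnit_iff_ne_zero.mpr ?_)
    intro h0
    apply hc0
    rw [eq_C_of_natDegree_eq_zero hc, h0, map_zero]
  have hassoc : Associated p (p * c) := ⟨hcu.unit, by simp⟩
  exact hassoc.irreducible hp.irreducible

lemma natDegree_le_of_dvd_irred {p g : (ZMod 2)[X]} (hg : Irreducible g)
    (hp : ¬ IsUnit p) (hpg : p ∣ g) : g.natDegree ≤ p.natDegree := by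
  obtain ⟨t, rfl⟩ := hpg
  rcases hg.isUnit_or_isUnit rfl with h | h
  · exact absurd h hp
  · have hp0 : p ≠ 0 := left_ne_zero_of_mul hg.ne_zero
    have ht0 : t ≠ 0 := right_ne_zero_of_mul hg.ne_zero
    rw [natDegree_mul hp0 ht0, natDegree_eq_zero_of_isUnit h]
    simp

lemma divisor_cases {q : ℕ} (hq : q.Prime) {d : ℕ} (h : d ∣ 2 * q) :
    d ∣ 2 ∨ d = q ∨ d = 2 * q := by
  by_cases hqd : q ∣ d
  · right
    obtain ⟨e, rfl⟩ := hqd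
    have he : e ∣ 2 := by
      have h2 : q * e ∣ q * 2 := by rwa [mul_comm 2 q] at h
      exact (Nat.mul_dvd_mul_iff_left hq.pos).mp h2
    rcases (Nat.prime_two.eq_one_or_self_of_dvd e he) with rfl | rfl
    · left; rw [mul_one]
    · right; rw [mul_comm]
  · left
    exact Nat.Coprime.dvd_of_dvd_mul_right ((hq.coprime_iff_not_dvd.mpr hqd).symm) h

lemma forward_dir {q : ℕ} (hq : q.Prime) (hodd : Odd q) (hq4 : 4 < q) : P2 (2 * q) := by
  intro f hsf hdeg hleast
  by_contra hirr
  have hq2 : 2 ≤ q := hq.two_le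
  have hf0 : f ≠ 0 := by
    intro h
    rw [h, natDegree_zero] at hdeg
    omega
  have h2q := hleast.1.2
  have hlb := hleast.2
  -- every prime factor has degree dividing 2q
  have hfac : ∀ p : (ZMod 2)[X], Prime p → p ∣ f → p.natDegree ∣ 2 * q := by
    intro p hp hpf
    exact (irred_dvd_iff hp.irreducible (2 * q)).mp (dvd_trans hpf h2q)
  -- Claim A : exists prime factor of degree q
  have claimA : ∃ p : (ZMod 2)[X], Prime p ∧ p ∣ f ∧ p.natDegree = q := by
    by_contra hA
    push_neg at hA
    have hdvd4 : f ∣ X ^ 2 ^ 2 - X := by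
      apply squarefree_dvd_of_forall_prime hsf
      intro p hp hpf
      rcases divisor_cases hq (hfac p hp hpf) with h2 | hq' | h2q'
      · exact (irred_dvd_iff hp.irreducible 2).mpr h2
      · exact absurd hq' (hA p hp hpf)
      · exact absurd (irred_of_prime_dvd_full hp hpf hf0 (by omega)) hirr
    have := hlb ⟨by norm_num, hdvd4⟩
    omega
  obtain ⟨p1, hp1, hp1f, hp1d⟩ := claimA
  -- Claim B : exists prime factor whose degree does not divide q
  have claimB : ∃ p : (ZMod 2)[X], Prime p ∧ p ∣ f ∧ ¬ p.natDegree ∣ q := by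
    by_contra hB
    push_neg at hB
    have hdvdq : f ∣ X ^ 2 ^ q - X := by
      apply squarefree_dvd_of_forall_prime hsf
      intro p hp hpf
      exact (irred_dvd_iff hp.irreducible q).mpr (hB p hp hpf)
    have := hlb ⟨by omega, hdvdq⟩
    omega
  obtain ⟨p2, hp2, hp2f, hp2d⟩ := claimB
  have hnot2q : ¬ 2 ∣ q := by
    rw [Nat.odd_iff] at hodd
    omega
  have hp2d2 : p2.natDegree = 2 := by
    rcases divisor_cases hq (hfac p2 hp2 hp2f) with h2 | hq' | h2q'
    · rcases (Nat.prime_two.eq_one_or_self_of_dvd _ h2) with h1 | h2'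
      · exact absurd (h1 ▸ one_dvd q) hp2d
      · exact h2'
    · exact absurd (hq' ▸ dvd_refl q) hp2d
    · exact absurd (irred_of_prime_dvd_full hp2 hp2f hf0 (by omega)) hirr
  obtain ⟨g', rfl⟩ := hp1f
  have hg'0 : g' ≠ 0 := right_ne_zero_of_mul hf0
  have hp10 : p1 ≠ 0 := hp1.ne_zero
  have hg'd : g'.natDegree = q := by
    have := natDegree_mul hp10 hg'0
    omega
  -- p2 divides g'
  have hp2p1 : ¬ p2 ∣ p1 := by
    intro hd
    have := natDegree_le_of_dvd_irred hp1.irreducible hp2.not_unit hd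
    omega
  have hp2g' : p2 ∣ g' := (hp2.dvd_or_dvd hp2f).resolve_left hp2p1
  -- every prime factor of g' has degree dividing 2
  have hg'fac : ∀ r : (ZMod 2)[X], Prime r → r ∣ g' → r.natDegree ∣ 2 := by
    intro r hr hrg'
    have hrf : r ∣ p1 * g' := hrg'.mul_left p1
    rcases divisor_cases hq (hfac r hr hrf) with h2 | hq' | h2q'
    · exact h2
    · exfalso
      have hirrg' : Irreducible g' := irred_of_prime_dvd_full hr hrg' hg'0 (by omega)
      have := natDegree_le_of_dvd_irred hirrg' hp2.not_unit hp2g'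
      omega
    · exfalso
      have := natDegree_le_of_dvd (hrg') hg'0
      omega
  have hg'sf : Squarefree g' := Squarefree.squarefree_of_dvd (dvd_mul_left g' p1) hsf
  have hg'dvd : g' ∣ X ^ 2 ^ 2 - X := by
    apply squarefree_dvd_of_forall_prime hg'sf
    intro r hr hrg'
    exact (irred_dvd_iff hr.irreducible 2).mpr (hg'fac r hr hrg')
  have hne : (X ^ 2 ^ 2 - X : (ZMod 2)[X]) ≠ 0 :=
    FiniteField.X_pow_card_pow_sub_X_ne_zero _ (by norm_num) (by norm_num)
  have hle := natDegree_le_of_dvd hg'dvd hne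
  have hdeg4 : (X ^ 2 ^ 2 - X : (ZMod 2)[X]).natDegree = 2 ^ 2 :=
    FiniteField.X_pow_card_pow_sub_X_natDegree_eq _ (by norm_num) (by norm_num)
  omega

lemma deg_p2 : (X ^ 2 + X + 1 : (ZMod 2)[X]).natDegree = 2 := by
  compute_degree!

lemma deg_p3 : (X ^ 3 + X + 1 : (ZMod 2)[X]).natDegree = 3 := by
  compute_degree!

lemma irred_p2 : Irreducible (X ^ 2 + X + 1 : (ZMod 2)[X]) := by
  rw [irreducible_iff_roots_eq_zero_of_degree_le_three (by rw [deg_p2]) (by rw [deg_p2]; norm_num)]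
  rw [Multiset.eq_zero_iff_forall_notMem]
  intro a ha
  have hne : (X ^ 2 + X + 1 : (ZMod 2)[X]) ≠ 0 := by
    intro h
    have := deg_p2
    rw [h, natDegree_zero] at this
    omega
  rw [mem_roots hne] at ha
  have := ha
  simp only [IsRoot, eval_add, eval_pow, eval_X, eval_one] at this
  fin_cases a <;> simp_all <;> exact absurd this (by decide)

lemma irred_p3 : Irreducible (X ^ 3 + X + 1 : (ZMod 2)[X]) := by
  rw [irreducible_iff_roots_eq_zero_of_degree_le_three (by rw [deg_p3]; norm_num) (by rw [deg_p3])]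
  rw [Multiset.eq_zero_iff_forall_notMem]
  intro a ha
  have hne : (X ^ 3 + X + 1 : (ZMod 2)[X]) ≠ 0 := by
    intro h
    have := deg_p3
    rw [h, natDegree_zero] at this
    omega
  rw [mem_roots hne] at ha
  have := ha
  simp only [IsRoot, eval_add, eval_pow, eval_X, eval_one] at this
  fin_cases a <;> simp_all <;> exact absurd this (by decide)

lemma not_P2_six : ¬ P2 (2 * 3) := by
  intro hP2
  set p2 : (ZMod 2)[X] := X ^ 2 + X + 1 with hp2def
  set p3 : (ZMod 2)[X] := X ^ 3 + X + 1 with hp3def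
  have hi2 := irred_p2
  have hi3 := irred_p3
  have hd2 := deg_p2
  have hd3 := deg_p3
  have h20 : p2 ≠ 0 := hi2.ne_zero
  have h30 : p3 ≠ 0 := hi3.ne_zero
  -- non-divisibilities
  have hX2 : ¬ (X : (ZMod 2)[X]) ∣ p2 := by
    rw [X_dvd_iff]
    intro h
    simp [hp2def, coeff_one] at h
  have hX3 : ¬ (X : (ZMod 2)[X]) ∣ p3 := by
    rw [X_dvd_iff]
    intro h
    simp [hp3def, coeff_one] at h
  have h23 : ¬ p2 ∣ p3 := by
    intro h
    have := natDegree_le_of_dvd_irred hi3 hi2.not_isUnit h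
    omega
  -- coprimality
  have hcX2 : IsCoprime (X : (ZMod 2)[X]) p2 := (irreducible_X.coprime_iff_not_dvd).mpr hX2
  have hcX3 : IsCoprime (X : (ZMod 2)[X]) p3 := (irreducible_X.coprime_iff_not_dvd).mpr hX3
  have hc23 : IsCoprime p2 p3 := (hi2.coprime_iff_not_dvd).mpr h23
  set f : (ZMod 2)[X] := X * (p2 * p3) with hfdef
  have hf0 : f ≠ 0 := mul_ne_zero X_ne_zero (mul_ne_zero h20 h30)
  have hfd : f.natDegree = 2 * 3 := by
    rw [hfdef, natDegree_mul X_ne_zero (mul_ne_zero h20 h30), natDegree_mul h20 h30,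
      natDegree_X, hd2, hd3]
  -- squarefree
  have hsf : Squarefree f := by
    rw [hfdef]
    rw [squarefree_mul_iff]
    refine ⟨(hcX2.mul_right hcX3).isRelPrime, irreducible_X.squarefree, ?_⟩
    rw [squarefree_mul_iff]
    exact ⟨hc23.isRelPrime, hi2.squarefree, hi3.squarefree⟩
  -- membership
  have hmem : f ∣ X ^ 2 ^ 6 - X := by
    have hdX : (X : (ZMod 2)[X]) ∣ X ^ 2 ^ 6 - X :=
      (irred_dvd_iff irreducible_X 6).mpr (by rw [natDegree_X]; norm_num)
    have hd2' : p2 ∣ X ^ 2 ^ 6 - X :=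
      (irred_dvd_iff hi2 6).mpr (by rw [hd2]; norm_num)
    have hd3' : p3 ∣ X ^ 2 ^ 6 - X :=
      (irred_dvd_iff hi3 6).mpr (by rw [hd3]; norm_num)
    exact (hcX2.mul_right hcX3).mul_dvd hdX (hc23.mul_dvd hd2' hd3')
  have hleast : IsLeast {n : ℕ | 0 < n ∧ f ∣ X ^ 2 ^ n - X} (2 * 3) := by
    constructor
    · exact ⟨by norm_num, by simpa using hmem⟩
    · rintro n ⟨hn0, hndvd⟩
      have hp2f : p2 ∣ f := ⟨X * p3, by ring⟩
      have hp3f : p3 ∣ f := ⟨X * p2, by ring⟩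
      have h2n : 2 ∣ n := by
        have := (irred_dvd_iff hi2 n).mp (dvd_trans hp2f hndvd)
        rwa [hd2] at this
      have h3n : 3 ∣ n := by
        have := (irred_dvd_iff hi3 n).mp (dvd_trans hp3f hndvd)
        rwa [hd3] at this
      have h6n : 6 ∣ n := Nat.Coprime.mul_dvd_of_dvd_of_dvd (by norm_num) h2n h3n
      have := Nat.le_of_dvd hn0 h6n
      omega
  have hirr : Irreducible f := hP2 f hsf hfd hleast
  rcases hirr.isUnit_or_isUnit hfdef with h | h
  · exact not_isUnit_X h
  · have := natDegree_eq_zero_of_isUnit h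
    rw [natDegree_mul h20 h30, hd2, hd3] at this
    omega

/-- For an odd prime `q`, property `P₂` holds for `m = 2q` iff `q > 4`. -/
theorem stmt_8 (q : ℕ) (hq : q.Prime) (hodd : Odd q) : P2 (2 * q) ↔ 4 < q := by
  constructor
  · intro hP2
    by_contra h4
    push_neg at h4
    have hq2 := hq.two_le
    have hq3 : q = 3 := by
      interval_cases q
      · exact absurd hodd (by decide)
      · rfl
      · exact absurd hq (by decide)
    rw [hq3] at hP2
    exact not_P2_six hP2
  · exact fun h => forward_dir hq hodd h
end

section
/- Let p < q be primes and i a positive integer with q > p^i > 2. If property P₂ holds for m = p^i·q, then (p^i − 2)·q > 2^(p^i) − 2^(p^(i−1)) + 1. -/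
open Polynomial


private lemma aux_two_pow_sub_one_dvd : ∀ {d n : ℕ}, 0 < d →
    (2 ^ d - 1 ∣ 2 ^ n - 1) → d ∣ n := by
  intro d n
  induction n using Nat.strong_induction_on with
  | _ n ih =>
    intro hd h
    rcases Nat.lt_or_ge n d with hlt | hge
    · have h1 : 2 ^ n - 1 < 2 ^ d - 1 := by
        have := Nat.pow_lt_pow_right (a := 2) (by norm_num) hlt
        have h2 : 0 < 2 ^ n := Nat.pow_pos (by norm_num)
        omega
      have h0 : 2 ^ n - 1 = 0 := Nat.eq_zero_of_dvd_of_lt h h1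
      have h3 : n < 2 ^ n := Nat.lt_two_pow_self
      have : n = 0 := by omega
      simp [this]
    · have hA : 1 ≤ 2 ^ (n - d) := Nat.one_le_two_pow
      have hB : 1 ≤ 2 ^ d := Nat.one_le_two_pow
      have hN : 1 ≤ 2 ^ n := Nat.one_le_two_pow
      have h1 : 2 ^ n = 2 ^ (n - d) * 2 ^ d := by
        rw [← pow_add]; congr 1; omega
      have key : 2 ^ n - 1 = 2 ^ (n - d) * (2 ^ d - 1) + (2 ^ (n - d) - 1) := by
        zify [hA, hB, hN]
        have h1' : ((2:ℤ)) ^ n = 2 ^ (n - d) * 2 ^ d := by exact_mod_cast h1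
        rw [h1']; ring
      have hb : 2 ^ d - 1 ∣ 2 ^ (n - d) * (2 ^ d - 1) := Dvd.intro_left _ rfl
      rw [key] at h
      have h5 : 2 ^ d - 1 ∣ 2 ^ (n - d) - 1 := (Nat.dvd_add_right hb).mp h
      have hd2 : d ∣ n - d := by
        rcases Nat.eq_or_lt_of_le hge with heq | hlt'
        · simp [← heq]
        · exact ih (n - d) (by omega) hd h5
      obtain ⟨c, hc⟩ := hd2
      exact ⟨c + 1, by rw [Nat.mul_succ, ← hc]; omega⟩

private lemma aux_card_adjoin {g : (ZMod 2)[X]} (hg : Irreducible g) :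
    ∀ _ : Fintype (AdjoinRoot g), Fintype.card (AdjoinRoot g) = 2 ^ g.natDegree := by
  haveI := Fact.mk hg
  intro _
  let pb := AdjoinRoot.powerBasis hg.ne_zero
  rw [Module.card_eq_pow_finrank (K := ZMod 2), ZMod.card, pb.finrank]
  congr 1

private lemma aux_dvd_of_deg_dvd {g : (ZMod 2)[X]} (hg : Irreducible g)
    {n : ℕ} (hdvd : g.natDegree ∣ n) : g ∣ X ^ 2 ^ n - X := by
  haveI := Fact.mk hg
  have hg0 : g ≠ 0 := hg.ne_zero
  let pb := AdjoinRoot.powerBasis hg0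
  haveI : Module.Finite (ZMod 2) (AdjoinRoot g) := pb.finite
  haveI : Finite (AdjoinRoot g) := Module.finite_of_finite (ZMod 2)
  haveI : Fintype (AdjoinRoot g) := Fintype.ofFinite _
  have hcard := aux_card_adjoin hg inferInstance
  obtain ⟨t, ht⟩ := hdvd
  have hroot : (AdjoinRoot.root g) ^ 2 ^ n = AdjoinRoot.root g := by
    rw [ht, pow_mul, ← hcard]
    exact FiniteField.pow_card_pow _ _
  have haev : (Polynomial.aeval (AdjoinRoot.root g)) (X ^ 2 ^ n - X : (ZMod 2)[X]) = 0 := by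
    rw [map_sub, map_pow, aeval_X, hroot, sub_self]
  have hmin : minpoly (ZMod 2) (AdjoinRoot.root g) ∣ X ^ 2 ^ n - X := minpoly.dvd _ _ haev
  rw [AdjoinRoot.minpoly_root hg0] at hmin
  have hlc : g.leadingCoeff = 1 := by
    have h1 : g.leadingCoeff ≠ 0 := leadingCoeff_ne_zero.mpr hg0
    revert h1; generalize g.leadingCoeff = a; revert a; decide
  rw [hlc] at hmin
  simpa using hmin

private lemma aux_deg_dvd_of_dvd {g : (ZMod 2)[X]} (hg : Irreducible g)
    {n : ℕ} (hn : 0 < n) (hdvd : g ∣ X ^ 2 ^ n - X) : g.natDegree ∣ n := by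
  haveI := Fact.mk hg
  have hg0 : g ≠ 0 := hg.ne_zero
  let pb := AdjoinRoot.powerBasis hg0
  haveI : Module.Finite (ZMod 2) (AdjoinRoot g) := pb.finite
  haveI : Finite (AdjoinRoot g) := Module.finite_of_finite (ZMod 2)
  haveI : Fintype (AdjoinRoot g) := Fintype.ofFinite _
  haveI : CharP (AdjoinRoot g) 2 :=
    charP_of_injective_algebraMap (algebraMap (ZMod 2) (AdjoinRoot g)).injective 2
  haveI : ExpChar (AdjoinRoot g) 2 := .prime Nat.prime_two
  have hcard := aux_card_adjoin hg inferInstance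
  have hx : (AdjoinRoot.root g) ^ 2 ^ n = AdjoinRoot.root g := by
    obtain ⟨c, hc⟩ := hdvd
    have h0 : (Polynomial.aeval (AdjoinRoot.root g)) (X ^ 2 ^ n - X : (ZMod 2)[X]) = 0 := by
      rw [hc, map_mul]
      have : (Polynomial.aeval (AdjoinRoot.root g)) g = 0 := by
        rw [AdjoinRoot.aeval_eq, AdjoinRoot.mk_self]
      rw [this, zero_mul]
    rw [map_sub, map_pow, aeval_X, sub_eq_zero] at h0
    exact h0
  let ψ : AdjoinRoot g →ₐ[ZMod 2] AdjoinRoot g :=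
    { toRingHom := iterateFrobenius (AdjoinRoot g) 2 n,
      commutes' := fun r => RingHom.congr_fun (Subsingleton.elim
        ((iterateFrobenius (AdjoinRoot g) 2 n).comp (algebraMap (ZMod 2) (AdjoinRoot g)))
        (algebraMap (ZMod 2) (AdjoinRoot g))) r }
  have hψ : ψ = AlgHom.id (ZMod 2) (AdjoinRoot g) := by
    apply AdjoinRoot.algHom_ext
    show iterateFrobenius (AdjoinRoot g) 2 n (AdjoinRoot.root g) = AdjoinRoot.root g
    rw [iterateFrobenius_def]; exact hx
  have hall : ∀ a : AdjoinRoot g, a ^ 2 ^ n = a := by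
    intro a
    have := AlgHom.congr_fun hψ a
    simpa [ψ, iterateFrobenius_def] using this
  obtain ⟨ζ, hζ⟩ := IsCyclic.exists_generator (α := (AdjoinRoot g)ˣ)
  have hord : orderOf ζ = 2 ^ g.natDegree - 1 := by
    rw [orderOf_eq_card_of_forall_mem_zpowers hζ]
    rw [Nat.card_eq_fintype_card, Fintype.card_units, hcard]
  have hpow : 1 ≤ 2 ^ n := Nat.one_le_two_pow
  have hζ1 : ζ ^ (2 ^ n - 1) = 1 := by
    have h1 : (ζ : AdjoinRoot g) ^ 2 ^ n = ζ := hall _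
    have h2 : ζ ^ 2 ^ n = ζ := Units.ext (by rw [Units.val_pow_eq_pow_val]; exact h1)
    have h3 : ζ ^ (2 ^ n - 1) * ζ = 1 * ζ := by
      rw [one_mul, ← pow_succ]
      rw [show 2 ^ n - 1 + 1 = 2 ^ n by omega]
      exact h2
    exact mul_right_cancel h3
  have hdvd2 : 2 ^ g.natDegree - 1 ∣ 2 ^ n - 1 := hord ▸ orderOf_dvd_of_pow_eq_one hζ1
  exact aux_two_pow_sub_one_dvd hg.natDegree_pos hdvd2

private lemma aux_T_dvd_T {a m : ℕ} (ha : 0 < a) (hm : 0 < m) (h : a ∣ m) :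
    (X ^ 2 ^ a - X : (ZMod 2)[X]) ∣ X ^ 2 ^ m - X := by
  obtain ⟨t, rfl⟩ := h
  have h1 : 2 ^ a - 1 ∣ 2 ^ (a * t) - 1 := by
    rw [pow_mul]; simpa using Nat.sub_dvd_pow_sub_pow (2 ^ a) 1 t
  obtain ⟨c, hc⟩ := h1
  have key : (X : (ZMod 2)[X]) ^ (2 ^ a - 1) - 1 ∣ X ^ (2 ^ (a * t) - 1) - 1 := by
    have h2 := sub_dvd_pow_sub_pow (R := (ZMod 2)[X]) (X ^ (2 ^ a - 1)) 1 c
    simpa [← pow_mul, ← hc] using h2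
  have e1 : ∀ b : ℕ, 0 < b →
      (X ^ 2 ^ b - X : (ZMod 2)[X]) = X * (X ^ (2 ^ b - 1) - 1) := by
    intro b hb
    have hb1 : 1 ≤ 2 ^ b := Nat.one_le_two_pow
    rw [mul_sub, mul_one, ← pow_succ', show 2 ^ b - 1 + 1 = 2 ^ b by omega]
  rw [e1 a ha, e1 (a * t) hm]
  exact mul_dvd_mul_left X key

private lemma aux_sq_T {m : ℕ} (hm : 0 < m) :
    Squarefree (X ^ 2 ^ m - X : (ZMod 2)[X]) :=
  (galois_poly_separable 2 (2 ^ m) (dvd_pow_self 2 hm.ne')).squarefree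

private lemma aux_deg_T {m : ℕ} (hm : 0 < m) :
    (X ^ 2 ^ m - X : (ZMod 2)[X]).natDegree = 2 ^ m :=
  FiniteField.X_pow_card_sub_X_natDegree_eq (ZMod 2) (Nat.one_lt_two_pow hm.ne')

private lemma aux_T_ne_zero {m : ℕ} (hm : 0 < m) :
    (X ^ 2 ^ m - X : (ZMod 2)[X]) ≠ 0 :=
  FiniteField.X_pow_card_sub_X_ne_zero (ZMod 2) (Nat.one_lt_two_pow hm.ne')

private lemma aux_exists_factor {e : ℕ} (he : 0 < e) :
    ∀ (s : ℕ) (V : (ZMod 2)[X]), V ≠ 0 →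
    (∀ g : (ZMod 2)[X], Irreducible g → g ∣ V → g.natDegree = e) →
    s * e ≤ V.natDegree → ∃ W, W ∣ V ∧ W.natDegree = s * e := by
  intro s
  induction s with
  | zero => intro V _ _ _; exact ⟨1, one_dvd _, by simp⟩
  | succ s ih =>
    intro V hV0 hfac hle
    have hdegV : 0 < V.natDegree := by
      have : 1 * e ≤ (s+1) * e := Nat.mul_le_mul_right e (by omega)
      omega
    obtain ⟨g, hgirr, hgdvd⟩ :=
      WfDvdMonoid.exists_irreducible_factor (not_isUnit_of_natDegree_pos V hdegV) hV0
    obtain ⟨V', rfl⟩ := hgdvd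
    have hg0 : g ≠ 0 := hgirr.ne_zero
    have hV'0 : V' ≠ 0 := by rintro rfl; simp at hV0
    have hge : g.natDegree = e := hfac g hgirr (dvd_mul_right _ _)
    have hdegmul : (g * V').natDegree = e + V'.natDegree := by
      rw [natDegree_mul hg0 hV'0, hge]
    obtain ⟨W, hWdvd, hWdeg⟩ := ih V' hV'0
      (fun g' h1 h2 => hfac g' h1 (h2.mul_left g))
      (by
        rw [hdegmul, Nat.succ_mul] at hle
        omega)
    refine ⟨g * W, mul_dvd_mul_left g hWdvd, ?_⟩
    have hW0 : W ≠ 0 := fun h => hV'0 (by simpa [h] using hWdvd)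
    rw [natDegree_mul hg0 hW0, hge, hWdeg, Nat.succ_mul]; omega

private lemma aux_deg_eq_of_dvd_irred {g h : (ZMod 2)[X]} (hg : Irreducible g)
    (hh : Irreducible h) (hdvd : g ∣ h) : g.natDegree = h.natDegree := by
  obtain ⟨c, rfl⟩ := hdvd
  rcases hh.isUnit_or_isUnit rfl with hu | hu
  · exact absurd hu hg.not_isUnit
  · have hc : c.natDegree = 0 := natDegree_eq_zero_of_isUnit hu
    have hc0 : c ≠ 0 := hu.ne_zero
    rw [natDegree_mul hg.ne_zero hc0, hc, add_zero]

private lemma aux_V_exists {N N' : ℕ} (hN' : 0 < N') (hNN : N' < N) (hdvd : N' ∣ N)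
    (hdiv : ∀ d, 0 < d → d ∣ N → d ≠ N → d ∣ N') :
    ∃ V : (ZMod 2)[X], V ≠ 0 ∧ V ∣ (X ^ 2 ^ N - X) ∧
      V.natDegree = 2 ^ N - 2 ^ N' ∧
      ∀ g : (ZMod 2)[X], Irreducible g → g ∣ V → g.natDegree = N := by
  have hN : 0 < N := hN'.trans hNN
  obtain ⟨V, hV⟩ := aux_T_dvd_T hN' hN hdvd
  have hT0 := aux_T_ne_zero hN
  have hU0 := aux_T_ne_zero hN'
  have hV0 : V ≠ 0 := by rintro rfl; rw [mul_zero] at hV; exact hT0 hV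
  refine ⟨V, hV0, Dvd.intro_left _ hV.symm, ?_, ?_⟩
  · have h1 : (X ^ 2 ^ N - X : (ZMod 2)[X]).natDegree =
        (X ^ 2 ^ N' - X : (ZMod 2)[X]).natDegree + V.natDegree := by
      rw [hV, natDegree_mul hU0 hV0]
    rw [aux_deg_T hN, aux_deg_T hN'] at h1
    omega
  · intro g hgirr hgdvd
    have hgT : g ∣ X ^ 2 ^ N - X := hgdvd.trans (Dvd.intro_left _ hV.symm)
    have hdg : g.natDegree ∣ N := aux_deg_dvd_of_dvd hgirr hN hgT
    by_contra hne
    have hgU : g ∣ X ^ 2 ^ N' - X :=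
      aux_dvd_of_deg_dvd hgirr (hdiv _ hgirr.natDegree_pos hdg hne)
    have hsq : g * g ∣ X ^ 2 ^ N - X := by
      rw [hV]; exact mul_dvd_mul hgU hgdvd
    exact hgirr.not_isUnit (aux_sq_T hN g hsq)

private lemma aux_coprime {a b : (ZMod 2)[X]} (ha : a ≠ 0) {e1 e2 : ℕ} (hne : e1 ≠ e2)
    (h1 : ∀ g : (ZMod 2)[X], Irreducible g → g ∣ a → g.natDegree = e1)
    (h2 : ∀ g : (ZMod 2)[X], Irreducible g → g ∣ b → g.natDegree = e2) :
    IsCoprime a b :=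
  isCoprime_of_irreducible_dvd (fun ⟨h, _⟩ => ha h)
    (fun z hz hza hzb => hne ((h1 z hz hza) ▸ (h2 z hz hzb) ▸ rfl))

private lemma aux_sq_le_two_pow {n : ℕ} (hn : 5 ≤ n) : n * n ≤ 2 ^ n := by
  induction n, hn using Nat.le_induction with
  | base => norm_num
  | succ n hn ih =>
    have h1 : 2 ^ (n + 1) = 2 * 2 ^ n := by ring
    nlinarith

private lemma aux_ku {P q : ℕ} (hP : 3 ≤ P) (hq : 5 ≤ q) (hco : Nat.Coprime q P) :
    ∃ k u : ℕ, (u = 1 ∨ u = 2) ∧ 1 ≤ k ∧ k ≤ P - 2 ∧ (k * q) % P = u := by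
  haveI : NeZero P := ⟨by omega⟩
  have hunit : IsUnit (q : ZMod P) := (ZMod.isUnit_iff_coprime q P).mpr hco
  set z := ((q : ZMod P))⁻¹ with hzdef
  have hz : z * (q : ZMod P) = 1 := ZMod.inv_mul_of_unit _ hunit
  set k1 := z.val with hk1def
  have hk1cast : ((k1 : ℕ) : ZMod P) = z := ZMod.natCast_rightInverse z
  have hk1lt : k1 < P := ZMod.val_lt z
  have hme : k1 * q ≡ 1 [MOD P] := by
    apply (ZMod.natCast_eq_natCast_iff _ _ _).mp
    push_cast [hk1cast, hz]
    rfl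
  have hmod1 : (k1 * q) % P = 1 := by
    have h1 : (1 : ℕ) % P = 1 := Nat.mod_eq_of_lt (by omega)
    unfold Nat.ModEq at hme
    rw [h1] at hme
    exact hme
  have hk1pos : 0 < k1 := by
    rcases Nat.eq_zero_or_pos k1 with h | h
    · rw [h, zero_mul, Nat.zero_mod] at hmod1; exact absurd hmod1 (by omega)
    · exact h
  rcases eq_or_ne k1 (P - 1) with he | hne
  · refine ⟨P - 2, 2, Or.inr rfl, by omega, le_refl _, ?_⟩
    have h2 : (P - 2) ≡ 2 * k1 [MOD P] := by
      show (P - 2) % P = (2 * k1) % P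
      rw [show 2 * k1 = P + (P - 2) by omega, Nat.add_mod_left]
    have h6 : (P - 2) * q ≡ 2 [MOD P] := by
      calc (P - 2) * q ≡ 2 * k1 * q [MOD P] := h2.mul_right q
        _ = 2 * (k1 * q) := by ring
        _ ≡ 2 * 1 [MOD P] := hme.mul_left 2
        _ = 2 := by ring
    have h7 : ((P - 2) * q) % P = 2 % P := h6
    rw [Nat.mod_eq_of_lt (show (2:ℕ) < P by omega)] at h7
    exact h7
  · exact ⟨k1, 1, Or.inl rfl, hk1pos, by omega, hmod1⟩

/-- For primes `p < q` and `i ≥ 1` with `q > p^i > 2`, if `P₂` holds for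
`m = p^i * q` then `(p^i - 2) * q > 2^(p^i) - 2^(p^(i-1)) + 1`. -/
theorem stmt_9 (p q i : ℕ) (hp : p.Prime) (hq : q.Prime) (hpq : p < q) (hi : 0 < i)
    (h2 : 2 < p ^ i) (hqi : p ^ i < q) (h : P2 (p ^ i * q)) :
    (p ^ i - 2) * q > 2 ^ p ^ i - 2 ^ p ^ (i - 1) + 1 := by
  by_contra hneg
  push_neg at hneg
  set P := p ^ i with hPdef
  set P' := p ^ (i - 1) with hP'def
  have hp2 : 2 ≤ p := hp.two_le
  have hP3 : 3 ≤ P := h2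
  have hq5 : 5 ≤ q := by
    have h4 : 4 ≤ q := by omega
    rcases Nat.eq_or_lt_of_le h4 with h4' | h4'
    · exfalso; rw [← h4'] at hq; norm_num at hq
    · omega
  have hP'P : P' ∣ P := pow_dvd_pow p (by omega)
  have hP'lt : P' < P := Nat.pow_lt_pow_right hp.one_lt (by omega)
  have hP'pos : 0 < P' := Nat.pow_pos hp.pos
  have hPpos : 0 < P := by omega
  have h2P'le : 2 ^ P' ≤ 2 ^ P := Nat.pow_le_pow_right (by norm_num) (le_of_lt hP'lt)
  have hcoPq : Nat.Coprime P q := ((Nat.coprime_primes hp hq).mpr (ne_of_lt hpq)).pow_left i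
  obtain ⟨k, u, hu12, hk1, hk2, hmodu⟩ := aux_ku hP3 hq5 hcoPq.symm
  have hu1 : 1 ≤ u := by omega
  have hu2 : u ≤ 2 := by omega
  set s := (k * q) / P with hsdef
  have hks : k * q = P * s + u := by
    rw [← hmodu]; exact (Nat.div_add_mod _ _).symm
  have hcomm : s * P = P * s := mul_comm s P
  have hs1 : 1 ≤ s := by
    have hq' : q ≤ k * q := Nat.le_mul_of_pos_left q (by omega)
    rcases Nat.eq_zero_or_pos s with h0 | h0
    · rw [h0, Nat.mul_zero] at hks; omega
    · exact h0
  set d := P - k with hddef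
  have hd1 : 1 ≤ d := by omega
  have hsP : s * P ≤ 2 ^ P - 2 ^ P' := by
    have h6 : k * q ≤ (P - 2) * q := Nat.mul_le_mul_right q hk2
    omega
  have hdq : d * q ≤ 2 ^ q - 2 := by
    have h8 : d * q ≤ (q - 1) * q := Nat.mul_le_mul_right q (by omega)
    have h9 : q * q ≤ 2 ^ q := aux_sq_le_two_pow hq5
    have h10 : (q - 1) * q = q * q - q := by rw [Nat.sub_one_mul]
    omega
  -- the polynomials
  have hmpos : 0 < P * q := Nat.mul_pos hPpos (by omega)
  obtain ⟨Vp, hVp0, hVpdvd, hVpdeg, hVpfac⟩ := aux_V_exists hP'pos hP'lt hP'P (by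
    intro dd hdd hdvd hne
    obtain ⟨j, hj, rfl⟩ := (Nat.dvd_prime_pow hp).mp hdvd
    have hji : j ≠ i := fun hji => hne (by rw [hji])
    exact pow_dvd_pow p (by omega))
  obtain ⟨Vq, hVq0, hVqdvd, hVqdeg, hVqfac⟩ := aux_V_exists (show 0 < 1 by norm_num)
    (show 1 < q by omega) (one_dvd q) (by
    intro dd hdd hdvd hne
    rcases hq.eq_one_or_self_of_dvd dd hdvd with h1 | h1
    · rw [h1]
    · exact absurd h1 hne)
  obtain ⟨Wp, hWpdvd, hWpdeg⟩ := aux_exists_factor hPpos s Vp hVp0 hVpfac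
    (by rw [hVpdeg]; exact hsP)
  obtain ⟨Wq, hWqdvd, hWqdeg⟩ := aux_exists_factor (show 0 < q by omega) d Vq hVq0 hVqfac
    (by rw [hVqdeg]; simpa using hdq)
  have hWp0 : Wp ≠ 0 := by rintro rfl; exact hVp0 (zero_dvd_iff.mp hWpdvd)
  have hWq0 : Wq ≠ 0 := by rintro rfl; exact hVq0 (zero_dvd_iff.mp hWqdvd)
  have facWp : ∀ g : (ZMod 2)[X], Irreducible g → g ∣ Wp → g.natDegree = P :=
    fun g h1 h2' => hVpfac g h1 (h2'.trans hWpdvd)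
  have facWq : ∀ g : (ZMod 2)[X], Irreducible g → g ∣ Wq → g.natDegree = q :=
    fun g h1 h2' => hVqfac g h1 (h2'.trans hWqdvd)
  -- linear part
  have hX1 : (X ^ 2 ^ 1 - X : (ZMod 2)[X]) = X * (X - C 1) := by
    rw [map_one]; ring
  obtain ⟨lin, hlin0, hlindvd1, hlindeg, hlinfac⟩ :
      ∃ lin : (ZMod 2)[X], lin ≠ 0 ∧ lin ∣ (X ^ 2 ^ 1 - X) ∧ lin.natDegree = u ∧
        (∀ g : (ZMod 2)[X], Irreducible g → g ∣ lin → g.natDegree = 1) := by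
    rcases hu12 with rfl | rfl
    · refine ⟨X, X_ne_zero, ⟨X - C 1, hX1⟩, natDegree_X, ?_⟩
      intro g hg hgdvd
      rw [aux_deg_eq_of_dvd_irred hg irreducible_X hgdvd, natDegree_X]
    · refine ⟨X * (X - C 1), mul_ne_zero X_ne_zero (X_sub_C_ne_zero 1), ⟨1, by
        rw [hX1, mul_one]⟩, ?_, ?_⟩
      · rw [natDegree_mul X_ne_zero (X_sub_C_ne_zero 1), natDegree_X, natDegree_X_sub_C]
      · intro g hg hgdvd
        rcases hg.prime.2.2 _ _ hgdvd with h1 | h1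
        · rw [aux_deg_eq_of_dvd_irred hg irreducible_X h1, natDegree_X]
        · rw [aux_deg_eq_of_dvd_irred hg (irreducible_X_sub_C 1) h1, natDegree_X_sub_C]
  -- coprimality
  have c1 : IsCoprime lin Wp := aux_coprime hlin0 (show (1:ℕ) ≠ P by omega) hlinfac facWp
  have c2 : IsCoprime lin Wq := aux_coprime hlin0 (show (1:ℕ) ≠ q by omega) hlinfac facWq
  have c3 : IsCoprime Wp Wq := aux_coprime hWp0 (show P ≠ q by omega) facWp facWq
  -- divisibility into X^(2^(P*q)) - X
  have hlinT : lin ∣ (X ^ 2 ^ (P * q) - X : (ZMod 2)[X]) :=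
    hlindvd1.trans (aux_T_dvd_T one_pos hmpos (one_dvd _))
  have hWpT : Wp ∣ (X ^ 2 ^ (P * q) - X : (ZMod 2)[X]) :=
    hWpdvd.trans (hVpdvd.trans (aux_T_dvd_T hPpos hmpos ⟨q, rfl⟩))
  have hWqT : Wq ∣ (X ^ 2 ^ (P * q) - X : (ZMod 2)[X]) :=
    hWqdvd.trans (hVqdvd.trans (aux_T_dvd_T (by omega) hmpos (dvd_mul_left q P)))
  have hfdvd : lin * (Wp * Wq) ∣ (X ^ 2 ^ (P * q) - X : (ZMod 2)[X]) :=
    (c1.mul_right c2).mul_dvd hlinT (c3.mul_dvd hWpT hWqT)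
  set f : (ZMod 2)[X] := lin * (Wp * Wq) with hfdef
  have hsf : Squarefree f := (aux_sq_T hmpos).squarefree_of_dvd hfdvd
  have hdegf : f.natDegree = P * q := by
    rw [hfdef, natDegree_mul hlin0 (mul_ne_zero hWp0 hWq0),
      natDegree_mul hWp0 hWq0, hlindeg, hWpdeg, hWqdeg]
    have hdkq : d * q + k * q = P * q := by
      rw [← Nat.add_mul, show d + k = P by omega]
    omega
  have hleast : IsLeast {n : ℕ | 0 < n ∧ f ∣ X ^ 2 ^ n - X} (P * q) := by
    constructor
    · exact ⟨hmpos, hfdvd⟩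
    · rintro n ⟨hn0, hfn⟩
      have hWpnu : ¬ IsUnit Wp := not_isUnit_of_natDegree_pos Wp (by
        rw [hWpdeg]; exact Nat.mul_pos (by omega) (by omega))
      obtain ⟨gp, hgpirr, hgpdvd⟩ := WfDvdMonoid.exists_irreducible_factor hWpnu hWp0
      have hWqnu : ¬ IsUnit Wq := not_isUnit_of_natDegree_pos Wq (by
        rw [hWqdeg]; exact Nat.mul_pos (by omega) (by omega))
      obtain ⟨gq, hgqirr, hgqdvd⟩ := WfDvdMonoid.exists_irreducible_factor hWqnu hWq0
      have hgpf : gp ∣ f := (hgpdvd.trans (dvd_mul_right Wp Wq)).trans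
        (dvd_mul_left (Wp * Wq) lin)
      have hgqf : gq ∣ f := (hgqdvd.trans (dvd_mul_left Wq Wp)).trans
        (dvd_mul_left (Wp * Wq) lin)
      have hPn : P ∣ n := (facWp gp hgpirr hgpdvd) ▸
        aux_deg_dvd_of_dvd hgpirr hn0 (hgpf.trans hfn)
      have hqn : q ∣ n := (facWq gq hgqirr hgqdvd) ▸
        aux_deg_dvd_of_dvd hgqirr hn0 (hgqf.trans hfn)
      exact Nat.le_of_dvd hn0 (hcoPq.mul_dvd_of_dvd_of_dvd hPn hqn)
  have hirr := h f hsf hdegf hleast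
  rw [hfdef] at hirr
  rcases of_irreducible_mul hirr with h1 | h1
  · exact not_isUnit_of_natDegree_pos lin (by omega) h1
  · exact not_isUnit_of_natDegree_pos (Wp * Wq) (by
      rw [natDegree_mul hWp0 hWq0]
      have := Nat.mul_pos (show 0 < s by omega) (show 0 < P by omega)
      omega) h1
end

section
/- Let p < q be primes and i a positive integer with q < p^i. If property P₂ holds for m = p^i·q, then (q − 2)·p^i > 2^q. -/
open Polynomial

instance : Subsingleton (Polynomial (ZMod 2))ˣ := by
  constructor
  intro u v
  have key : ∀ w : (Polynomial (ZMod 2))ˣ, (w : Polynomial (ZMod 2)) = 1 := by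
    intro w
    have h0 := Polynomial.isUnit_iff_degree_eq_zero.mp w.isUnit
    have h1 : (w : Polynomial (ZMod 2)) = C ((w : Polynomial (ZMod 2)).coeff 0) :=
      Polynomial.eq_C_of_degree_le_zero (le_of_eq h0)
    have h2 : IsUnit ((w : Polynomial (ZMod 2)).coeff 0) := by
      have := w.isUnit
      rw [h1] at this
      exact Polynomial.isUnit_C.mp this
    have h3 : ∀ a : ZMod 2, IsUnit a → a = 1 := by decide
    rw [h1, h3 _ h2, map_one]
  exact Units.ext (by rw [key u, key v])

-- dvd chain: d ∣ n → X^(2^d) - X ∣ X^(2^n) - X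
theorem dvd_chain {d n : ℕ} (hdn : d ∣ n) :
    (X ^ 2 ^ d - X : Polynomial (ZMod 2)) ∣ X ^ 2 ^ n - X := by
  obtain ⟨k, rfl⟩ := hdn
  have h1 : (2 : ℕ) ^ d - 1 ∣ 2 ^ (d * k) - 1 := by
    simpa only [one_pow, pow_mul] using Nat.sub_dvd_pow_sub_pow (2 ^ d) 1 k
  obtain ⟨c, hc⟩ := h1
  have hd1 : 1 ≤ 2 ^ d := Nat.one_le_two_pow
  have hn1 : 1 ≤ 2 ^ (d * k) := Nat.one_le_two_pow
  have e1 : (X ^ 2 ^ d - X : Polynomial (ZMod 2)) = X * (X ^ (2 ^ d - 1) - 1) := by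
    rw [mul_sub, mul_one, ← pow_succ', Nat.sub_add_cancel hd1]
  have e2 : (X ^ 2 ^ (d * k) - X : Polynomial (ZMod 2)) = X * (X ^ (2 ^ (d * k) - 1) - 1) := by
    rw [mul_sub, mul_one, ← pow_succ', Nat.sub_add_cancel hn1]
  rw [e1, e2]
  refine mul_dvd_mul_left X ?_
  have : (X ^ (2 ^ (d*k) - 1) - 1 : Polynomial (ZMod 2)) = (X ^ (2^d - 1)) ^ c - 1 ^ c := by
    rw [one_pow, ← pow_mul, ← hc]
  rw [this]
  exact sub_dvd_pow_sub_pow _ 1 c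

-- g monic irreducible of degree d divides X^(2^d) - X
theorem irred_dvd_self {g : Polynomial (ZMod 2)} (hm : g.Monic) (hirr : Irreducible g) :
    g ∣ X ^ 2 ^ g.natDegree - X := by
  haveI : Fact (Irreducible g) := ⟨hirr⟩
  set K := AdjoinRoot g
  have hg0 : g ≠ 0 := hirr.ne_zero
  set pb := AdjoinRoot.powerBasis hg0 with hpb
  haveI : Module.Finite (ZMod 2) K := pb.finite
  haveI : Fintype K := Module.fintypeOfFintype (Module.Free.chooseBasis (ZMod 2) K)
  have hcard : Fintype.card K = 2 ^ g.natDegree := by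
    rw [Module.card_eq_pow_finrank (K := ZMod 2) (V := K), ZMod.card, pb.finrank, hpb, AdjoinRoot.powerBasis_dim]
  have hroot : (AdjoinRoot.root g) ^ 2 ^ g.natDegree = AdjoinRoot.root g := by
    rw [← hcard]; exact FiniteField.pow_card _
  have haeval : (aeval (AdjoinRoot.root g)) (X ^ 2 ^ g.natDegree - X : Polynomial (ZMod 2)) = 0 := by
    simp [hroot]
  have hminpoly : minpoly (ZMod 2) (AdjoinRoot.root g) = g := by
    rw [AdjoinRoot.minpoly_root hg0, hm.leadingCoeff, inv_one, map_one, mul_one]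
  have := minpoly.dvd (ZMod 2) (AdjoinRoot.root g) haeval
  rwa [hminpoly] at this

theorem pow_sub_one_dvd_iff {d n : ℕ} (hd : 0 < d) (h : 2 ^ d - 1 ∣ 2 ^ n - 1) : d ∣ n := by
  have h2d : 1 ≤ 2 ^ d := Nat.one_le_two_pow
  have hmod : (2 : ℕ) ^ d ≡ 1 [MOD 2 ^ d - 1] := ((Nat.modEq_iff_dvd' h2d).mpr dvd_rfl).symm
  have hn' : (2 : ℕ) ^ n ≡ 1 [MOD 2 ^ d - 1] := ((Nat.modEq_iff_dvd' Nat.one_le_two_pow).mpr h).symm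
  have hr : (2 : ℕ) ^ (n % d) ≡ 1 [MOD 2 ^ d - 1] := by
    calc (2:ℕ) ^ (n % d) = 1 ^ (n / d) * 2 ^ (n % d) := by rw [one_pow, one_mul]
    _ ≡ (2 ^ d) ^ (n / d) * 2 ^ (n % d) [MOD 2 ^ d - 1] :=
        (Nat.ModEq.pow _ hmod.symm).mul_right _
    _ = 2 ^ n := by rw [← pow_mul, ← pow_add, Nat.div_add_mod]
    _ ≡ 1 [MOD 2 ^ d - 1] := hn'
  have hdvd : 2 ^ d - 1 ∣ 2 ^ (n % d) - 1 := (Nat.modEq_iff_dvd' Nat.one_le_two_pow).mp hr.symm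
  have hlt : 2 ^ (n % d) - 1 < 2 ^ d - 1 := by
    have := Nat.mod_lt n hd
    have h1 : (2:ℕ) ^ (n % d) < 2 ^ d := Nat.pow_lt_pow_right one_lt_two this
    have h2 : 1 ≤ (2:ℕ) ^ (n % d) := Nat.one_le_two_pow
    omega
  have h0 : 2 ^ (n % d) - 1 = 0 := Nat.eq_zero_of_dvd_of_lt hdvd hlt
  have : n % d = 0 := by
    by_contra hne
    have : 1 ≤ n % d := Nat.one_le_iff_ne_zero.mpr hne
    have : (2:ℕ)^1 ≤ 2 ^ (n % d) := Nat.pow_le_pow_right (by norm_num) this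
    omega
  exact Nat.dvd_of_mod_eq_zero this

theorem deg_dvd_of_dvd {g : Polynomial (ZMod 2)} (hm : g.Monic) (hirr : Irreducible g)
    {n : ℕ} (hn : 0 < n) (hdvd : g ∣ X ^ 2 ^ n - X) : g.natDegree ∣ n := by
  haveI : Fact (Irreducible g) := ⟨hirr⟩
  set K := AdjoinRoot g
  have hg0 : g ≠ 0 := hirr.ne_zero
  set pb := AdjoinRoot.powerBasis hg0 with hpb
  haveI : Module.Finite (ZMod 2) K := pb.finite
  haveI : Fintype K := Module.fintypeOfFintype (Module.Free.chooseBasis (ZMod 2) K)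
  have hcard : Fintype.card K = 2 ^ g.natDegree := by
    rw [Module.card_eq_pow_finrank (K := ZMod 2) (V := K), ZMod.card, pb.finrank, hpb,
      AdjoinRoot.powerBasis_dim]
  haveI : CharP K 2 := (Algebra.charP_iff (ZMod 2) K 2).mp inferInstance
  set α := AdjoinRoot.root g
  have hαroot : (aeval α) g = 0 := by
    have := AdjoinRoot.eval₂_root g
    rwa [aeval_def]
  have hα : α ^ 2 ^ n = α := by
    obtain ⟨c, hc⟩ := hdvd
    have : (aeval α) (X ^ 2 ^ n - X : Polynomial (ZMod 2)) = 0 := by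
      rw [hc, map_mul, hαroot, zero_mul]
    simpa [sub_eq_zero] using this
  -- every element of K is fixed by x ↦ x^(2^n)
  have hfix : ∀ x : K, x ^ 2 ^ n = x := by
    have h01 : ∀ r : ZMod 2, r = 0 ∨ r = 1 := by decide
    set φ : K →ₐ[ZMod 2] K :=
      { toRingHom := iterateFrobenius K 2 n
        commutes' := by
          intro r
          rcases h01 r with hr | hr <;> simp [hr] }
    have hφ : φ = AlgHom.id (ZMod 2) K := by
      apply AdjoinRoot.algHom_ext
      show iterateFrobenius K 2 n α = α
      rw [iterateFrobenius_def]; exact hα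
    intro x
    have := AlgHom.congr_fun hφ x
    simpa [φ, iterateFrobenius_def] using this
  -- units are cyclic
  obtain ⟨ζ, hζ⟩ := IsCyclic.exists_generator (α := Kˣ)
  have horder : orderOf ζ = 2 ^ g.natDegree - 1 := by
    rw [orderOf_eq_card_of_forall_mem_zpowers hζ, Nat.card_eq_fintype_card, Fintype.card_units, hcard]
  have hζpow : ζ ^ (2 ^ n - 1) = 1 := by
    have h1 : (ζ : K) ^ 2 ^ n = (ζ : K) := hfix _
    have h2 : ζ ^ 2 ^ n = ζ := Units.ext (by push_cast [h1]; rfl)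
    have h3 : ζ ^ (2 ^ n - 1) * ζ = ζ := by
      rw [← pow_succ, Nat.sub_add_cancel (Nat.one_le_two_pow), h2]
    have := mul_right_cancel (b := ζ) (a := ζ ^ (2^n -1)) (c := 1) (by rw [one_mul, h3])
    exact this
  have hdvd2 : 2 ^ g.natDegree - 1 ∣ 2 ^ n - 1 := by
    rw [← horder]; exact orderOf_dvd_of_pow_eq_one hζpow
  exact pow_sub_one_dvd_iff hirr.natDegree_pos hdvd2

lemma arithL1 (b : ℕ) : (b+1)*(b+2) + 2 ≤ 2^(b+2) := by
  induction b with
  | zero => norm_num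
  | succ b ih =>
    have h2 : (2:ℕ)^(b+3) = 2 * 2^(b+2) := by ring
    nlinarith [ih]

lemma arithCL (b : ℕ) : (b+2)^2*(b+3) + 2^(b+2) ≤ 4^(b+2) := by
  induction b with
  | zero => norm_num
  | succ b ih =>
    have h2 : (2:ℕ)^(b+1+2) = 2 * 2^(b+2) := by ring
    have h4 : (4:ℕ)^(b+1+2) = 4 * 4^(b+2) := by ring
    have hpoly : ((b+1)+2)^2*((b+1)+3) ≤ 4*((b+2)^2*(b+3)) := by nlinarith
    calc ((b+1)+2)^2*((b+1)+3) + 2^((b+1)+2)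
        ≤ 4*((b+2)^2*(b+3)) + 2*2^(b+2) := by omega
      _ ≤ 4*((b+2)^2*(b+3)) + 4*2^(b+2) := by omega
      _ = 4*((b+2)^2*(b+3) + 2^(b+2)) := by ring
      _ ≤ 4*4^(b+2) := by omega
      _ = 4^((b+1)+2) := h4.symm

lemma arithL2 (p a : ℕ) (hp : 2 ≤ p) (hpa : p ≤ a) : (p+1)*(p*a) + 2^a ≤ 2^(p*a) := by
  have ha : 2 ≤ a := hp.trans hpa
  obtain ⟨b, rfl⟩ : ∃ b, a = b + 2 := ⟨a - 2, by omega⟩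
  have h1 : (p+1)*(p*(b+2)) ≤ (b+2)^2*(b+3) := by
    have := Nat.mul_le_mul (show p+1 ≤ b+3 by omega)
      (Nat.mul_le_mul_right (b+2) (show p ≤ b+2 from hpa))
    calc (p+1)*(p*(b+2)) ≤ (b+3)*((b+2)*(b+2)) := this
      _ = (b+2)^2*(b+3) := by ring
  have h3 : (4:ℕ)^(b+2) ≤ 2^(p*(b+2)) := by
    have : (4:ℕ)^(b+2) = 2^(2*(b+2)) := by rw [pow_mul]; norm_num
    rw [this]
    exact Nat.pow_le_pow_right (by norm_num) (by nlinarith)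
  have := arithCL b
  omega

lemma count_bound (p e cnt : ℕ) (hp : 2 ≤ p)
    (hcnt : (e = 1 ∧ cnt ≤ p - 1) ∨ (2 ≤ e ∧ cnt ≤ p + 1)) :
    cnt * p^e + 2^(p^(e-1)) ≤ 2^(p^e) := by
  rcases hcnt with ⟨rfl, hc⟩ | ⟨he, hc⟩
  · have e0 : p ^ (1-1) = 1 := by norm_num
    rw [e0, pow_one]
    obtain ⟨b, rfl⟩ : ∃ b, p = b + 2 := ⟨p - 2, by omega⟩
    have h1 := arithL1 b
    have h2 : cnt * (b+2) ≤ (b+1)*(b+2) := Nat.mul_le_mul_right _ (by omega)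
    omega
  · have h1 : p ^ e = p * p ^ (e-1) := by
      conv_lhs => rw [show e = 1 + (e-1) by omega]
      rw [pow_add, pow_one]
    have hpa : p ≤ p ^ (e-1) := by
      conv_lhs => rw [← pow_one p]
      exact Nat.pow_le_pow_right (by omega) (by omega)
    have h2 := arithL2 p (p^(e-1)) hp hpa
    rw [h1]
    calc cnt * (p * p^(e-1)) + 2^(p^(e-1)) ≤ (p+1) * (p * p^(e-1)) + 2^(p^(e-1)) := by
          exact Nat.add_le_add_right (Nat.mul_le_mul_right _ hc) _
      _ ≤ 2^(p * p^(e-1)) := h2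

lemma digits_sum (p : ℕ) (hp : 2 ≤ p) : ∀ i t, t < p ^ i →
    ∑ u ∈ Finset.range i, (t / p ^ u % p) * p ^ u = t := by
  intro i
  induction i with
  | zero => intro t ht; simp at ht ⊢; omega
  | succ i ih =>
    intro t ht
    rw [Finset.sum_range_succ']
    have hdiv : ∀ u, t / p ^ (u+1) = (t / p) / p ^ u := by
      intro u
      rw [Nat.div_div_eq_div_mul, ← pow_succ']
    have hterm : ∀ u, (t / p ^ (u+1) % p) * p ^ (u+1) = ((t/p) / p ^ u % p) * p ^ u * p := by
      intro u
      rw [hdiv, pow_succ, mul_comm (p^u) p, ← mul_assoc]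
      ring
    rw [Finset.sum_congr rfl (fun u _ => hterm u), ← Finset.sum_mul]
    have htp : t / p < p ^ i := by
      rw [Nat.div_lt_iff_lt_mul (by omega : 0 < p), ← pow_succ]
      exact ht
    rw [ih (t/p) htp]
    simp only [pow_zero, Nat.div_one, mul_one]
    rw [mul_comm]
    exact Nat.div_add_mod t p


theorem exists_irreducibles (d c t : ℕ) (hc : 0 < c) (hcd : c < d)
    (hdvd : ∀ d₀, d₀ ∣ d → d₀ ≠ d → d₀ ∣ c)
    (ht : t * d ≤ 2 ^ d - 2 ^ c) :
    ∃ T : Finset (Polynomial (ZMod 2)), T.card = t ∧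
      ∀ g ∈ T, g.Monic ∧ Irreducible g ∧ g.natDegree = d := by
  classical
  have hd : 0 < d := hc.trans hcd
  set K := GaloisField 2 d
  haveI : Fintype K := Fintype.ofFinite K
  have hcardK : Fintype.card K = 2 ^ d := by
    rw [← Nat.card_eq_fintype_card]; exact GaloisField.card 2 d hd.ne'
  have hfinrank : Module.finrank (ZMod 2) K = d := GaloisField.finrank 2 hd.ne'
  set B : Finset K := Finset.univ.filter (fun x => x ^ 2 ^ c = x) with hB
  have hcardB : B.card ≤ 2 ^ c := by
    have hP0 : (X ^ 2 ^ c - X : K[X]) ≠ 0 :=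
      FiniteField.X_pow_card_pow_sub_X_ne_zero _ hc.ne' one_lt_two
    have hsub : B ⊆ (X ^ 2 ^ c - X : K[X]).roots.toFinset := by
      intro x hx
      rw [hB, Finset.mem_filter] at hx
      rw [Multiset.mem_toFinset, mem_roots hP0]
      simp [sub_eq_zero, hx.2]
    calc B.card ≤ _ := Finset.card_le_card hsub
      _ ≤ (X ^ 2 ^ c - X : K[X]).roots.card := Multiset.toFinset_card_le _
      _ ≤ (X ^ 2 ^ c - X : K[X]).natDegree := card_roots' _
      _ = 2 ^ c := FiniteField.X_pow_card_pow_sub_X_natDegree_eq _ hc.ne' one_lt_two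
  set S : Finset K := Finset.univ.filter (fun x => ¬ x ^ 2 ^ c = x) with hS
  have hcardS : 2 ^ d - 2 ^ c ≤ S.card := by
    have h2 : B.card + S.card = 2 ^ d := by
      have := Finset.card_filter_add_card_filter_not (s := (Finset.univ : Finset K))
        (p := fun x => x ^ 2 ^ c = x)
      rw [Finset.card_univ, hcardK] at this
      simpa [hB, hS] using this
    omega
  -- each x in S has minpoly of degree d
  have hminS : ∀ x ∈ S, (minpoly (ZMod 2) x).Monic ∧ Irreducible (minpoly (ZMod 2) x) ∧
      (minpoly (ZMod 2) x).natDegree = d := by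
    intro x hx
    have hint : IsIntegral (ZMod 2) x := IsIntegral.of_finite _ _
    refine ⟨minpoly.monic hint, minpoly.irreducible hint, ?_⟩
    have hdd : (minpoly (ZMod 2) x).natDegree ∣ d := by
      have := minpoly.degree_dvd hint
      rwa [hfinrank] at this
    by_contra hne
    have hc' : (minpoly (ZMod 2) x).natDegree ∣ c := hdvd _ hdd hne
    have h1 : minpoly (ZMod 2) x ∣ X ^ 2 ^ c - X := by
      refine dvd_trans (irred_dvd_self (minpoly.monic hint) (minpoly.irreducible hint)) ?_
      exact dvd_chain hc'
    have h2 : (aeval x) (X ^ 2 ^ c - X : Polynomial (ZMod 2)) = 0 := by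
      obtain ⟨e, he⟩ := h1
      rw [he, map_mul, minpoly.aeval, zero_mul]
    rw [hS, Finset.mem_filter] at hx
    refine hx.2 ?_
    simpa [sub_eq_zero] using h2
  set T0 := S.image (fun x => minpoly (ZMod 2) x) with hT0
  have hfiber : S.card ≤ d * T0.card := by
    refine Finset.card_le_mul_card_image S d ?_
    intro g hg
    obtain ⟨x₀, hx₀S, hx₀⟩ := Finset.mem_image.mp hg
    obtain ⟨hmon, hirr, hdeg⟩ := hminS x₀ hx₀S
    rw [hx₀] at hmon hirr hdeg
    have hg0 : g ≠ 0 := hirr.ne_zero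
    have hsub : S.filter (fun x => minpoly (ZMod 2) x = g) ⊆
        (g.map (algebraMap (ZMod 2) K)).roots.toFinset := by
      intro x hx
      rw [Finset.mem_filter] at hx
      have hroot : (aeval x) g = 0 := by rw [← hx.2]; exact minpoly.aeval _ _
      have hmap0 : g.map (algebraMap (ZMod 2) K) ≠ 0 := by
        simpa using (Polynomial.map_ne_zero_iff
          (algebraMap (ZMod 2) K).injective).mpr hg0
      rw [Multiset.mem_toFinset, mem_roots hmap0, IsRoot.def, eval_map, ← aeval_def, hroot]
    calc (S.filter (fun x => minpoly (ZMod 2) x = g)).card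
        ≤ _ := Finset.card_le_card hsub
      _ ≤ (g.map (algebraMap (ZMod 2) K)).roots.card := Multiset.toFinset_card_le _
      _ ≤ (g.map (algebraMap (ZMod 2) K)).natDegree := card_roots' _
      _ = g.natDegree := hmon.natDegree_map _
      _ = d := hdeg
  have htT0 : t ≤ T0.card := by
    have h1 : t * d ≤ d * T0.card := le_trans (le_trans ht hcardS) hfiber
    rw [mul_comm d] at h1
    exact Nat.le_of_mul_le_mul_right h1 hd
  obtain ⟨T, hTsub, hTcard⟩ := Finset.exists_subset_card_eq htT0
  refine ⟨T, hTcard, fun g hg => ?_⟩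
  obtain ⟨x, hxS, hx⟩ := Finset.mem_image.mp (hTsub hg)
  have := hminS x hxS
  rwa [hx] at this

/-- For primes `p < q` and `i ≥ 1` with `q < p^i`, if `P₂` holds for
`m = p^i * q` then `(q - 2) * p^i > 2^q`. -/
theorem stmt_10 (p q i : ℕ) (hp : p.Prime) (hq : q.Prime) (hpq : p < q) (hi : 0 < i)
    (hqi : q < p ^ i) (h : P2 (p ^ i * q)) : (q - 2) * p ^ i > 2 ^ q := by
  classical
  by_contra hcon
  push_neg at hcon
  have hp2 : 2 ≤ p := hp.two_le
  have hq3 : 3 ≤ q := by have := hq.two_le; omega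
  have hi2 : 2 ≤ i := by
    rcases Nat.lt_or_ge i 2 with h2 | h2
    · have hii : i = 1 := by omega
      rw [hii, pow_one] at hqi
      omega
    · exact h2
  set P := p ^ i with hP
  have hppP : p * p ≤ P := by
    calc p * p = p ^ 2 := by ring
      _ ≤ p ^ i := Nat.pow_le_pow_right (by omega) hi2
  have hP4 : 4 ≤ P := le_trans (by nlinarith) hppP
  have hqP : q < P := hqi
  -- q does not divide 2 * P
  have hq2P : ¬ q ∣ 2 * P := by
    intro hdvd
    rcases (Nat.Prime.dvd_mul hq).mp hdvd with h2 | hPd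
    · have := Nat.le_of_dvd (by norm_num) h2; omega
    · rw [hP] at hPd
      have := hq.dvd_of_dvd_pow hPd
      have := (Nat.prime_dvd_prime_iff_eq hq hp).mp this
      omega
  have hb_pos : 0 < 2 * P % q := by
    rcases Nat.eq_zero_or_pos (2 * P % q) with h0 | h0
    · exact absurd (Nat.dvd_of_mod_eq_zero h0) hq2P
    · exact h0
  have hb_lt : 2 * P % q < q := Nat.mod_lt _ (by omega)
  set r := q - 2 * P % q with hr
  have hr1 : 1 ≤ r := by omega
  have hrq : r < q := by omega
  have hqr : q ∣ 2 * P + r := by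
    refine ⟨2 * P / q + 1, ?_⟩
    have hdm := Nat.div_add_mod (2 * P) q
    rw [Nat.mul_add, mul_one]
    set c := q * (2 * P / q) with hc
    omega
  -- choose j
  have hj : ∃ j, j < p ∧ (r + q * j) % p ≤ 2 ∧ 2 * P + (r + q * j) < P * q ∧
      (r + q * j) < p * q := by
    by_cases hp3 : p ≤ 3
    · refine ⟨0, by omega, ?_, ?_, ?_⟩
      · simp only [mul_zero, add_zero]
        have := Nat.mod_lt r (show 0 < p by omega)
        omega
      · have h1 : 3 * P ≤ q * P := Nat.mul_le_mul_right P hq3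
        have h2 : q * P = P * q := by ring
        omega
      · simp only [mul_zero, add_zero]
        have h1 : q * 1 ≤ q * p := Nat.mul_le_mul_left q (by omega)
        have h2 : q * p = p * q := by ring
        omega
    · haveI : Fact p.Prime := ⟨hp⟩
      have hqp0 : (q : ZMod p) ≠ 0 := by
        rw [Ne, ZMod.natCast_eq_zero_iff]
        intro hdvd
        have := (Nat.prime_dvd_prime_iff_eq hp hq).mp hdvd
        omega
      set u : ZMod p := (-(r : ZMod p)) * (q : ZMod p)⁻¹ with hu
      have hval : u.val < p := ZMod.val_lt u
      refine ⟨u.val, hval, ?_, ?_, ?_⟩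
      · have hcast : ((r + q * u.val : ℕ) : ZMod p) = 0 := by
          push_cast
          rw [ZMod.natCast_val, ZMod.cast_id, hu]
          field_simp
          ring
        have hdvd := (ZMod.natCast_eq_zero_iff _ p).mp hcast
        have hmod0 : (r + q * u.val) % p = 0 := Nat.eq_zero_of_dvd_of_lt hdvd |> fun _ => Nat.mod_eq_zero_of_dvd hdvd
        omega
      · -- 2P + (r + q * u.val) < P * q
        have h6 : q * (u.val + 1) = q * u.val + q := by ring
        have h7 : q * (u.val + 1) ≤ q * p := Nat.mul_le_mul_left q (by omega)
        have ha : q ≤ p * (q - 2) := by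
          calc q ≤ 3 * (q - 2) := by omega
            _ ≤ p * (q - 2) := Nat.mul_le_mul_right _ (by omega)
        have hb' : p * q ≤ p * (p * (q - 2)) := Nat.mul_le_mul_left p ha
        have hcc : p * (p * (q - 2)) = (p * p) * (q - 2) := by ring
        have hd' : (p * p) * (q - 2) ≤ P * (q - 2) := Nat.mul_le_mul_right _ hppP
        have h9 : P * 2 + P * (q - 2) = P * q := by
          rw [← Nat.mul_add]
          congr 1
          omega
        have hqp' : q * p = p * q := by ring
        omega
      · have h6 : q * (u.val + 1) = q * u.val + q := by ring
        have h7 : q * (u.val + 1) ≤ q * p := Nat.mul_le_mul_left q (by omega)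
        have hqp' : q * p = p * q := by ring
        omega
  obtain ⟨j, hjp, hRmod, hSlt, hRpq⟩ := hj
  set R := r + q * j with hRdef
  set Sv := 2 * P + R with hSv
  have hqS : q ∣ Sv := by
    have h1 : Sv = (2 * P + r) + q * j := by rw [hSv, hRdef]; ring
    rw [h1]
    exact Nat.dvd_add hqr (Dvd.intro j rfl)
  have hSv2P : 2 * P < Sv := by omega
  set sq := Sv / q with hsq
  have hsv_eq : Sv = sq * q := by
    rw [hsq, Nat.div_mul_cancel hqS]
  have hsqP : sq < P := by
    by_contra hge
    push_neg at hge
    have : P * q ≤ sq * q := Nat.mul_le_mul_right q hge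
    omega
  set k := P - sq with hk
  have hk1 : 1 ≤ k := by omega
  have hSk : Sv + k * q = P * q := by
    have h1 : k * q = (P - sq) * q := by rw [hk]
    have h2 : (P - sq) * q + sq * q = P * q := by
      rw [← Nat.add_mul]
      congr 1
      omega
    omega
  -- k * q ≤ 2^q - 2
  have hkub : k * q + 2 ≤ 2 ^ q := by
    have h1 : k * q + 2 * P + 1 ≤ P * q := by omega
    have e1 : (q - 2) * P + 2 * P = q * P := by
      rw [← Nat.add_mul]
      congr 1
      omega
    have e2 : q * P = P * q := by ring
    have hfermat : 2 ^ q % q = 2 := by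
      haveI : Fact q.Prime := ⟨hq⟩
      have hf : (2 : ZMod q) ^ q = 2 := ZMod.pow_card 2
      have hcast : ((2 ^ q : ℕ) : ZMod q) = ((2 : ℕ) : ZMod q) := by push_cast [hf]; rfl
      have := (ZMod.natCast_eq_natCast_iff _ _ _).mp hcast
      have h2q : 2 % q = 2 := Nat.mod_eq_of_lt (by omega)
      rwa [Nat.ModEq, h2q] at this
    -- k*q ≤ 2^q - 1 from hcon; rule out equality via mod q
    have hle : k * q + 1 ≤ 2 ^ q := by omega
    by_contra hgt
    push_neg at hgt
    have heq : k * q = 2 ^ q - 1 := by omega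
    have hdm := Nat.div_add_mod (2 ^ q) q
    set D := q * (2 ^ q / q) with hD
    have h2qD : 2 ^ q = D + 2 := by omega
    have hqD : q ∣ D := Dvd.intro _ rfl
    have hqkq : q ∣ k * q := Dvd.intro_left k rfl
    have : k * q = D + 1 := by omega
    have hq1 : q ∣ 1 := by
      have hsub := Nat.dvd_sub hqkq hqD
      have heq1 : k * q - D = 1 := by omega
      rwa [heq1] at hsub
    have := Nat.le_of_dvd (by norm_num) hq1
    omega
  -- digits setup
  set c₀ := R % p with hc₀
  set t := R / p with ht
  have hc₀2 : c₀ ≤ 2 := hRmod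
  have hRct : c₀ + p * t = R := by
    rw [hc₀, ht, add_comm]
    exact Nat.div_add_mod R p
  have htq : t < q := by
    rw [ht, Nat.div_lt_iff_lt_mul (show 0 < p by omega)]
    have hqp' : q * p = p * q := by ring
    omega
  have htP : t < p ^ i := by omega
  have hdig := digits_sum p hp2 i t htP
  set cnt : ℕ → ℕ := fun u => (t / p ^ u % p) + (if u = i - 1 then 2 else 0) with hcnt
  -- existence of finsets of irreducible polys of degree p^(u+1)
  have hex : ∀ u, ∃ T : Finset (Polynomial (ZMod 2)),
      T.card = (if u < i then cnt u else 0) ∧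
      ∀ g ∈ T, g.Monic ∧ Irreducible g ∧ g.natDegree = p ^ (u + 1) := by
    intro u
    by_cases hu : u < i
    · have hcb : cnt u * p ^ (u+1) + 2 ^ (p ^ u) ≤ 2 ^ (p ^ (u+1)) := by
        have := count_bound p (u+1) (cnt u) hp2 ?_
        · rwa [Nat.add_sub_cancel] at this
        · by_cases hu0 : u = 0
          · left
            subst hu0
            refine ⟨rfl, ?_⟩
            have hne : (0 : ℕ) ≠ i - 1 := by omega
            have : cnt 0 = t / p ^ 0 % p := by simp [hcnt, hne]
            rw [this]
            have := Nat.mod_lt (t / p ^ 0) (show 0 < p by omega)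
            omega
          · right
            refine ⟨by omega, ?_⟩
            have h1 : t / p ^ u % p < p := Nat.mod_lt _ (by omega)
            have h2 : (if u = i - 1 then 2 else 0) ≤ 2 := by split <;> omega
            simp only [hcnt]
            omega
      have := exists_irreducibles (p ^ (u+1)) (p ^ u) (cnt u)
        (pow_pos (by omega) u)
        (Nat.pow_lt_pow_succ (by omega))
        ?_ (by omega)
      · obtain ⟨T, hT1, hT2⟩ := this
        exact ⟨T, by rw [if_pos hu]; exact hT1, hT2⟩
      · intro d₀ hd₀ hne
        obtain ⟨l, hl, rfl⟩ := (Nat.dvd_prime_pow hp).mp hd₀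
        have : l ≠ u + 1 := fun hh => hne (by rw [hh])
        exact pow_dvd_pow p (by omega)
    · exact ⟨∅, by rw [if_neg hu]; simp, by simp⟩
  choose Tf hTfcard hTfprop using hex
  have hTfempty : ∀ u, ¬ u < i → Tf u = ∅ := by
    intro u hu
    have := hTfcard u
    rw [if_neg hu] at this
    exact Finset.card_eq_zero.mp this
  -- degree q polynomials
  obtain ⟨Tq, hTqcard, hTqprop⟩ := exists_irreducibles q 1 k (by norm_num) (by omega)
    (fun d₀ hd₀ hne => by
      rcases (Nat.Prime.eq_one_or_self_of_dvd hq d₀ hd₀) with h1 | h1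
      · exact h1 ▸ dvd_rfl
      · exact absurd h1 hne)
    (by rw [pow_one]; omega)
  -- degree 1 polynomials
  have hex1 : ∃ T : Finset (Polynomial (ZMod 2)), T.card = c₀ ∧
      ∀ g ∈ T, g.Monic ∧ Irreducible g ∧ g.natDegree = 1 := by
    have hX1 : (X + C 1 : Polynomial (ZMod 2)) = X - C 1 := by
      have : (1 : ZMod 2) = -1 := by decide
      rw [sub_eq_add_neg, ← C_neg, ← this]
    interval_cases c₀
    · exact ⟨∅, by simp, by simp⟩
    · exact ⟨{X}, by simp, by
        intro g hg
        rw [Finset.mem_singleton] at hg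
        subst hg
        exact ⟨monic_X, irreducible_X, natDegree_X⟩⟩
    · refine ⟨{X, X + C 1}, ?_, ?_⟩
      · rw [Finset.card_insert_of_notMem, Finset.card_singleton]
        rw [Finset.mem_singleton]
        intro hcontra
        have := congrArg (fun f => Polynomial.eval 0 f) hcontra
        simp at this
      · intro g hg
        rcases Finset.mem_insert.mp hg with rfl | hg
        · exact ⟨monic_X, irreducible_X, natDegree_X⟩
        · rw [Finset.mem_singleton] at hg
          subst hg
          exact ⟨monic_X_add_C 1, by rw [hX1]; exact irreducible_X_sub_C 1,
            natDegree_X_add_C 1⟩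
  obtain ⟨T1, hT1card, hT1prop⟩ := hex1
  -- assemble the union
  set TB := (Finset.range i).biUnion Tf with hTB
  have hTBprop : ∀ g ∈ TB, ∃ u, u < i ∧ g.Monic ∧ Irreducible g ∧ g.natDegree = p ^ (u+1) := by
    intro g hg
    obtain ⟨u, hu, hgu⟩ := Finset.mem_biUnion.mp hg
    exact ⟨u, Finset.mem_range.mp hu, hTfprop u g hgu⟩
  have hdisj_q1 : Disjoint Tq T1 := by
    rw [Finset.disjoint_left]
    intro g hgq hg1
    have h1 := (hTqprop g hgq).2.2
    have h2 := (hT1prop g hg1).2.2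
    omega
  have hdisj_qB : Disjoint (Tq ∪ T1) TB := by
    rw [Finset.disjoint_left]
    intro g hg hgB
    obtain ⟨u, hu, _, _, hdeg⟩ := hTBprop g hgB
    have hppow : p ∣ p ^ (u+1) := dvd_pow_self p (by omega)
    rcases Finset.mem_union.mp hg with hgq | hg1
    · have h1 := (hTqprop g hgq).2.2
      rw [h1] at hdeg
      rw [← hdeg] at hppow
      have := (Nat.prime_dvd_prime_iff_eq hp hq).mp hppow
      omega
    · have h1 := (hT1prop g hg1).2.2
      rw [h1] at hdeg
      have hge : p ^ 1 ≤ p ^ (u+1) := Nat.pow_le_pow_right (by omega) (by omega)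
      rw [pow_one] at hge
      omega
  have hTfdisj : ∀ u ∈ Finset.range i, ∀ v ∈ Finset.range i, u ≠ v →
      Disjoint (Tf u) (Tf v) := by
    intro u hu v hv huv
    rw [Finset.disjoint_left]
    intro g hgu hgv
    have h1 := (hTfprop u g hgu).2.2
    have h2 := (hTfprop v g hgv).2.2
    rw [h1] at h2
    exact huv (by
      have := Nat.pow_right_injective hp2 h2
      omega)
  set T := (Tq ∪ T1) ∪ TB with hT
  have hTmon : ∀ g ∈ T, g.Monic ∧ Irreducible g := by
    intro g hg
    rcases Finset.mem_union.mp hg with hg' | hgB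
    · rcases Finset.mem_union.mp hg' with hgq | hg1
      · exact ⟨(hTqprop g hgq).1, (hTqprop g hgq).2.1⟩
      · exact ⟨(hT1prop g hg1).1, (hT1prop g hg1).2.1⟩
    · obtain ⟨u, _, hm, hi', _⟩ := hTBprop g hgB
      exact ⟨hm, hi'⟩
  have hTdegdvd : ∀ g ∈ T, g.natDegree ∣ P * q := by
    intro g hg
    rcases Finset.mem_union.mp hg with hg' | hgB
    · rcases Finset.mem_union.mp hg' with hgq | hg1
      · rw [(hTqprop g hgq).2.2]; exact Dvd.intro P (mul_comm q P)
      · rw [(hT1prop g hg1).2.2]; exact one_dvd _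
    · obtain ⟨u, hu, _, _, hdeg⟩ := hTBprop g hgB
      rw [hdeg]
      exact dvd_mul_of_dvd_left (by rw [hP]; exact pow_dvd_pow p (by omega)) q
  set f : Polynomial (ZMod 2) := ∏ g ∈ T, g with hf
  have hprime : ∀ g ∈ T, Prime g := fun g hg =>
    UniqueFactorizationMonoid.irreducible_iff_prime.mp (hTmon g hg).2
  have hfdvd : ∀ n : ℕ, (∀ g ∈ T, g.natDegree ∣ n) → f ∣ X ^ 2 ^ n - X := by
    intro n hn
    refine Finset.prod_primes_dvd _ hprime ?_
    intro g hg
    exact (irred_dvd_self (hTmon g hg).1 (hTmon g hg).2).trans (dvd_chain (hn g hg))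
  have hPq0 : 0 < P * q := Nat.mul_pos (by omega) (by omega)
  have hfm : f ∣ X ^ 2 ^ (P * q) - X := hfdvd _ hTdegdvd
  have hsep : Separable (X ^ 2 ^ (P * q) - X : Polynomial (ZMod 2)) :=
    galois_poly_separable 2 (2 ^ (P * q)) (dvd_pow_self 2 (by omega))
  have hsqf : Squarefree f := Squarefree.squarefree_of_dvd hfm hsep.squarefree
  -- degree computation
  have hdeg : f.natDegree = P * q := by
    rw [hf, Polynomial.natDegree_prod_of_monic _ _ (fun g hg => (hTmon g hg).1)]
    rw [hT, Finset.sum_union hdisj_qB, Finset.sum_union hdisj_q1]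
    have hsumq : ∑ g ∈ Tq, g.natDegree = k * q := by
      rw [Finset.sum_congr rfl (fun g hg => (hTqprop g hg).2.2), Finset.sum_const,
        hTqcard, smul_eq_mul]
    have hsum1 : ∑ g ∈ T1, g.natDegree = c₀ := by
      rw [Finset.sum_congr rfl (fun g hg => (hT1prop g hg).2.2), Finset.sum_const,
        hT1card, smul_eq_mul, mul_one]
    have hsumB : ∑ g ∈ TB, g.natDegree = t * p + 2 * P := by
      rw [hTB, Finset.sum_biUnion hTfdisj]
      have hterm : ∀ u ∈ Finset.range i, ∑ g ∈ Tf u, g.natDegree = cnt u * p ^ (u+1) := by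
        intro u hu
        rw [Finset.sum_congr rfl (fun g hg => (hTfprop u g hg).2.2), Finset.sum_const,
          hTfcard u, if_pos (Finset.mem_range.mp hu), smul_eq_mul]
      rw [Finset.sum_congr rfl hterm]
      have hsplit : ∀ u, cnt u * p ^ (u+1) =
          (t / p ^ u % p) * p ^ u * p + (if u = i-1 then 2 * p ^ (u+1) else 0) := by
        intro u
        show ((t / p ^ u % p) + (if u = i - 1 then 2 else 0)) * p ^ (u+1) = _
        rw [Nat.add_mul]
        congr 1
        · rw [pow_succ]; ring
        · split <;> simp
      rw [Finset.sum_congr rfl (fun u _ => hsplit u), Finset.sum_add_distrib,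
        ← Finset.sum_mul, hdig, Finset.sum_ite_eq' (Finset.range i) (i-1)
          (fun u => 2 * p ^ (u+1)), if_pos (Finset.mem_range.mpr (by omega : i - 1 < i))]
      rw [show i - 1 + 1 = i by omega, ← hP]
    rw [hsumq, hsum1, hsumB]
    have e1 : t * p = p * t := by ring
    omega
  -- witnesses
  have hTqne : Tq.Nonempty := Finset.card_pos.mp (by omega)
  obtain ⟨gq, hgq⟩ := hTqne
  have hgqT : gq ∈ T := Finset.mem_union_left _ (Finset.mem_union_left _ hgq)
  have hTine : (Tf (i-1)).Nonempty := by
    rw [← Finset.card_pos, hTfcard, if_pos (by omega : i - 1 < i)]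
    show 0 < (t / p ^ (i-1) % p) + (if i - 1 = i - 1 then 2 else 0)
    rw [if_pos rfl]
    omega
  obtain ⟨gP, hgP⟩ := hTine
  have hgPdeg : gP.natDegree = p ^ i := by
    have := (hTfprop (i-1) gP hgP).2.2
    rwa [show i - 1 + 1 = i by omega] at this
  have hgPT : gP ∈ T := Finset.mem_union_right _
    (Finset.mem_biUnion.mpr ⟨i-1, Finset.mem_range.mpr (by omega), hgP⟩)
  -- IsLeast
  have hleast : IsLeast {n : ℕ | 0 < n ∧ f ∣ X ^ 2 ^ n - X} (p ^ i * q) := by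
    constructor
    · exact ⟨hPq0, hfm⟩
    · rintro n ⟨hn0, hfn⟩
      have hgq_dvd : gq ∣ X ^ 2 ^ n - X := (Finset.dvd_prod_of_mem (fun g => g) hgqT).trans hfn
      have hqn : q ∣ n := by
        have := deg_dvd_of_dvd (hTmon gq hgqT).1 (hTmon gq hgqT).2 hn0 hgq_dvd
        rwa [(hTqprop gq hgq).2.2] at this
      have hPn : p ^ i ∣ n := by
        have hgP_dvd : gP ∣ X ^ 2 ^ n - X := (Finset.dvd_prod_of_mem (fun g => g) hgPT).trans hfn
        have := deg_dvd_of_dvd (hTmon gP hgPT).1 (hTmon gP hgPT).2 hn0 hgP_dvd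
        rwa [hgPdeg] at this
      have hcop : Nat.Coprime (p ^ i) q :=
        Nat.Coprime.pow_left i ((Nat.coprime_primes hp hq).mpr (by omega))
      exact Nat.le_of_dvd hn0 (hcop.mul_dvd_of_dvd_of_dvd hPn hqn)
  have hirrf : Irreducible f := h f hsqf hdeg hleast
  -- contradiction: f is a product of at least two irreducibles
  have hne : gP ≠ gq := by
    intro hcontra
    have h1 := (hTqprop gq hgq).2.2
    rw [← hcontra, hgPdeg] at h1
    omega
  have hfactor : f = gq * ∏ g ∈ T.erase gq, g := (Finset.mul_prod_erase T _ hgqT).symm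
  rcases hirrf.isUnit_or_isUnit hfactor with hu1 | hu2
  · exact (hTmon gq hgqT).2.not_isUnit hu1
  · have hgP_mem : gP ∈ T.erase gq := Finset.mem_erase.mpr ⟨hne, hgPT⟩
    have hdvd' : gP ∣ ∏ g ∈ T.erase gq, g := Finset.dvd_prod_of_mem _ hgP_mem
    exact (hTmon gP hgPT).2.not_isUnit (isUnit_of_dvd_unit hdvd' hu2)
end

section
/- Let p be a prime and i a positive integer. Then property P₂ holds for m = p^i: every squarefree polynomial f ∈ 𝔽₂[X] of degree p^i with o(f) = p^i is irreducible. -/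
open Polynomial

lemma mersenne_dvd_iff {d n : ℕ} (hd : 0 < d) : 2 ^ d - 1 ∣ 2 ^ n - 1 ↔ d ∣ n := by
  constructor
  · intro h
    induction n using Nat.strong_induction_on with
    | _ n ih =>
      rcases Nat.lt_or_ge n d with hlt | hge
      · rcases Nat.eq_zero_or_pos n with rfl | hn
        · exact Dvd.intro 0 rfl
        · exfalso
          have h1 : (2:ℕ) ^ n < 2 ^ d := Nat.pow_lt_pow_right (by norm_num) hlt
          have h2 : (2:ℕ) ^ 1 ≤ 2 ^ n := Nat.pow_le_pow_right (by norm_num) hn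
          have h3 := Nat.le_of_dvd (by omega) h
          omega
      · have h1 : (1:ℕ) ≤ 2 ^ d := Nat.one_le_two_pow
        have h2 : (1:ℕ) ≤ 2 ^ (n - d) := Nat.one_le_two_pow
        have h3 : 2 ^ (n - d) * 2 ^ d = 2 ^ n := by
          rw [← pow_add]; congr 1; omega
        have key : 2 ^ (n - d) * (2 ^ d - 1) = 2 ^ n - 2 ^ (n - d) := by
          rw [Nat.mul_sub, mul_one, h3]
        have h4 : 2 ^ d - 1 ∣ 2 ^ (n - d) - 1 := by
          have hdd : 2 ^ d - 1 ∣ 2 ^ (n - d) * (2 ^ d - 1) := dvd_mul_left _ _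
          have h6 : 2 ^ (n - d) ≤ 2 ^ n := Nat.pow_le_pow_right (by norm_num) (by omega)
          have heq : 2 ^ (n - d) - 1 = (2 ^ n - 1) - 2 ^ (n - d) * (2 ^ d - 1) := by omega
          rw [heq]
          exact Nat.dvd_sub h hdd
        have h5 := ih (n - d) (by omega) h4
        obtain ⟨k, hk⟩ := h5
        refine ⟨k + 1, ?_⟩
        rw [Nat.mul_add, Nat.mul_one]
        omega
  · rintro ⟨k, rfl⟩
    have := Nat.sub_dvd_pow_sub_pow (2 ^ d) 1 k
    simpa [one_pow, ← pow_mul] using this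

lemma irred_dvd_X_pow_sub_X_iff {g : Polynomial (ZMod 2)} (hg : Irreducible g) {n : ℕ}
    (hn : 0 < n) : g ∣ X ^ 2 ^ n - X ↔ g.natDegree ∣ n := by
  haveI := Fact.mk hg
  have hd0 : 0 < g.natDegree := hg.natDegree_pos
  have hdvd_iff : g ∣ X ^ 2 ^ n - X ↔
      (AdjoinRoot.root g) ^ 2 ^ n = AdjoinRoot.root g := by
    rw [← AdjoinRoot.mk_eq_zero, map_sub, map_pow, AdjoinRoot.mk_X, sub_eq_zero]
  let pb := AdjoinRoot.powerBasis hg.ne_zero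
  haveI : Module.Finite (ZMod 2) (AdjoinRoot g) := pb.finite
  haveI : Finite (AdjoinRoot g) := Module.finite_iff_finite.mp ‹_›
  haveI : Fintype (AdjoinRoot g) := Fintype.ofFinite _
  have hcard : Fintype.card (AdjoinRoot g) = 2 ^ g.natDegree := by
    rw [Module.card_eq_pow_finrank (K := ZMod 2), ZMod.card, pb.finrank]
    rfl
  constructor
  · intro hdvd
    -- every element of the residue field is fixed by `x ↦ x ^ 2 ^ n`
    have hall : ∀ x : AdjoinRoot g, x ^ 2 ^ n = x := by
      intro x
      obtain ⟨P, rfl⟩ := AdjoinRoot.mk_surjective x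
      have hPpow : P ^ 2 ^ n = P.comp (X ^ 2 ^ n) := by
        rw [← expand_eq_comp_X_pow, ← map_iterateFrobenius_expand (p := 2) P n, iterateFrobenius_eq_pow, ZMod.frobenius_zmod]
        rw [← RingHom.one_def, one_pow, RingHom.one_def, Polynomial.map_id]
      have hcomp : (X : Polynomial (ZMod 2)) ^ 2 ^ n - X ∣
          P.comp (X ^ 2 ^ n) - P.comp X := by
        have h := sub_dvd_eval_sub ((X : Polynomial (ZMod 2)) ^ 2 ^ n) X (P.map C)
        simpa only [eval_map, comp] using h
      have hgP : g ∣ P ^ 2 ^ n - P := by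
        rw [hPpow]
        calc g ∣ X ^ 2 ^ n - X := hdvd
          _ ∣ P.comp (X ^ 2 ^ n) - P.comp X := hcomp
          _ = P.comp (X ^ 2 ^ n) - P := by rw [comp_X]
      have := (AdjoinRoot.mk_eq_zero).mpr hgP
      rw [map_sub, map_pow, sub_eq_zero] at this
      exact this
    -- take a generator of the (cyclic) unit group
    obtain ⟨ζ, hζ⟩ := IsCyclic.exists_generator (α := (AdjoinRoot g)ˣ)
    have hord : orderOf ζ = 2 ^ g.natDegree - 1 := by
      rw [orderOf_eq_card_of_forall_mem_zpowers hζ, Nat.card_units,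
        Nat.card_eq_fintype_card, hcard]
    have hone : ζ ^ (2 ^ n - 1) = 1 := by
      have h2 : (ζ : AdjoinRoot g) ^ 2 ^ n = ζ := hall ζ
      have h3 : ζ ^ 2 ^ n = ζ := Units.ext (by push_cast; exact h2)
      have h4 : ζ ^ (2 ^ n - 1) * ζ = ζ := by
        rw [← pow_succ]
        have h5 : 2 ^ n - 1 + 1 = 2 ^ n :=
          Nat.succ_pred_eq_of_pos (Nat.pow_pos (n := n) (by norm_num))
        rw [h5, h3]
      exact mul_right_cancel (b := ζ) (by rw [one_mul, h4])
    have hdvd1 : 2 ^ g.natDegree - 1 ∣ 2 ^ n - 1 := hord ▸ orderOf_dvd_of_pow_eq_one hone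
    exact (mersenne_dvd_iff hd0).mp hdvd1
  · rintro ⟨k, rfl⟩
    rw [hdvd_iff, pow_mul, ← hcard]
    exact FiniteField.pow_card_pow k (AdjoinRoot.root g)

lemma squarefree_dvd_of_prime_dvd (f : Polynomial (ZMod 2)) :
    ∀ D : Polynomial (ZMod 2), Squarefree f →
      (∀ g : Polynomial (ZMod 2), Prime g → g ∣ f → g ∣ D) → f ∣ D := by
  refine UniqueFactorizationMonoid.induction_on_prime f ?_ ?_ ?_
  · intro D hf _
    exact absurd hf not_squarefree_zero
  · intro x hx D _ _
    exact hx.dvd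
  · intro a q ha hq ih D hqa h
    have hsa : Squarefree a := hqa.squarefree_of_dvd (dvd_mul_left a q)
    have hqD : q ∣ D := h q hq (dvd_mul_right q a)
    have haD : a ∣ D := ih D hsa fun g hg hga => h g hg (hga.mul_left q)
    have hqa' : ¬q ∣ a := fun hd => hq.not_unit (hqa q (mul_dvd_mul_left q hd))
    exact ((hq.irreducible.coprime_iff_not_dvd).mpr hqa').mul_dvd hqD haD

/-- For a prime `p` and `i ≥ 1`, property `P₂` holds for `m = p^i`. -/
theorem stmt_11 (p i : ℕ) (hp : p.Prime) (hi : 0 < i) : P2 (p ^ i) := by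
  intro f hsf hdeg hleast
  obtain ⟨⟨hm0, hfdvd⟩, hlb⟩ := hleast
  by_contra hirr
  have hf0 : f ≠ 0 := by
    intro h
    rw [h, natDegree_zero] at hdeg
    exact absurd hdeg.symm (pow_pos hp.pos i).ne'
  -- every prime factor of `f` divides `X ^ 2 ^ p ^ (i - 1) - X`
  have hkey : ∀ g : Polynomial (ZMod 2), Prime g → g ∣ f →
      g ∣ X ^ 2 ^ p ^ (i - 1) - X := by
    intro g hg hgf
    have hgd : g.natDegree ∣ p ^ i :=
      (irred_dvd_X_pow_sub_X_iff hg.irreducible hm0).mp (hgf.trans hfdvd)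
    obtain ⟨j, hj, hjd⟩ := (Nat.dvd_prime_pow hp).mp hgd
    have hji : j ≠ i := by
      rintro rfl
      -- then `g` and `f` are associated, so `f` is irreducible
      obtain ⟨c, hc⟩ := hgf
      have hc0 : c ≠ 0 := by rintro rfl; rw [mul_zero] at hc; exact hf0 hc
      have hcdeg : c.natDegree = 0 := by
        have hmul := natDegree_mul hg.ne_zero hc0
        rw [← hc, hdeg, hjd] at hmul
        omega
      obtain ⟨a, ha⟩ := natDegree_eq_zero.mp hcdeg
      have ha0 : a ≠ 0 := by rintro rfl; rw [map_zero] at ha; exact hc0 ha.symm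
      have hu : IsUnit c := ha ▸ isUnit_C.mpr (IsUnit.mk0 a ha0)
      have hassoc : Associated g f := ⟨hu.unit, by rw [IsUnit.unit_spec]; exact hc.symm⟩
      exact hirr (hassoc.irreducible hg.irreducible)
    have hgd' : g.natDegree ∣ p ^ (i - 1) := hjd ▸ pow_dvd_pow p (by omega)
    exact (irred_dvd_X_pow_sub_X_iff hg.irreducible (pow_pos hp.pos _)).mpr hgd'
  have hfd2 : f ∣ X ^ 2 ^ p ^ (i - 1) - X := squarefree_dvd_of_prime_dvd f _ hsf hkey
  have hle := hlb ⟨pow_pos hp.pos _, hfd2⟩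
  have hlt : p ^ (i - 1) < p ^ i := Nat.pow_lt_pow_right hp.one_lt (by omega)
  omega
end
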